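/- arXiv:1509.00126 — 4 statements merged into one kernel-verified Lean document; each statement's English description precedes it below -/
import Mathlib

section
/- Proposition 4(e): If c > max{ f_α + δ·((n_α−1)·f_α + (n_β−1)·f_β), f_α + δ·((n_α−2)·f_α + n_β·f_β), (1−δ)·f_α }, then for every agent i (of either type) the maximum over all networks g on I of u_i(g) equals 0, attained by any network in which i is a singleton. -/
open Finset

noncomputable section

open scoped Classical

variable {I : Type*}

/-- Benefit function of the two-type connections model: a connection to a
type-α agent (a member of `A`) yields `fα`, a connection to a type-β agent
yields `fβ` (before spatial discounting). -/
def fTheta [DecidableEq I] (A : Finset I) (fα fβ : ℝ) (j : I) : ℝ :=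
  if j ∈ A then fα else fβ

/-- One-period payoff of agent `i` in network `g`:
`u_i(g) = Σ_{j ≠ i reachable from i} δ^(d_g(i,j)-1) f(θ_j) − deg_g(i)·c`. -/
def payoff [Fintype I] (f : I → ℝ) (c δ : ℝ) (g : SimpleGraph I) (i : I) : ℝ :=
  (∑ j ∈ univ.filter fun j => j ≠ i ∧ g.Reachable i j, δ ^ (g.dist i j - 1) * f j)
    - ((univ.filter fun j => g.Adj i j).card : ℝ) * c

/-- Total one-period payoff `ν(g) = Σ_i u_i(g)`. -/
def totalPayoff [Fintype I] (f : I → ℝ) (c δ : ℝ) (g : SimpleGraph I) : ℝ :=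
  ∑ i, payoff f c δ g i

/-- A network is strongly efficient if it maximizes the total payoff. -/
def StronglyEfficient [Fintype I] (f : I → ℝ) (c δ : ℝ) (g : SimpleGraph I) : Prop :=
  ∀ g' : SimpleGraph I, totalPayoff f c δ g' ≤ totalPayoff f c δ g

/-- A network `g` is core-stable if no subgroup `I'` of agents, together with a
network `g'` all of whose links are inside `I'`, gives every member of `I'` a
weakly higher payoff and some member a strictly higher payoff. -/
def CoreStable [Fintype I] (f : I → ℝ) (c δ : ℝ) (g : SimpleGraph I) : Prop :=
  ¬ ∃ (I' : Finset I) (g' : SimpleGraph I),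
      (∀ i j : I, g'.Adj i j → i ∈ I' ∧ j ∈ I') ∧
      (∀ i ∈ I', payoff f c δ g i ≤ payoff f c δ g' i) ∧
      (∃ i ∈ I', payoff f c δ g i < payoff f c δ g' i)

/-- The network whose links are exactly the pairs with at least one endpoint in `A`. -/
def withCore (A : Finset I) : SimpleGraph I where
  Adj i j := i ≠ j ∧ (i ∈ A ∨ j ∈ A)
  symm := ⟨fun i j h => ⟨h.1.symm, h.2.symm⟩⟩
  loopless := ⟨fun i h => h.1 rfl⟩

/-- The clique on `A`: exactly all pairs of distinct members of `A` are linked. -/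
def cliqueOn (A : Finset I) : SimpleGraph I where
  Adj i j := i ≠ j ∧ i ∈ A ∧ j ∈ A
  symm := ⟨fun i j h => ⟨h.1.symm, h.2.2, h.2.1⟩⟩
  loopless := ⟨fun i h => h.1 rfl⟩

/-- Clique on `A` together with the links `{i₀, j}` for every agent `j ∉ A`. -/
def coreStar (A : Finset I) (i₀ : I) : SimpleGraph I where
  Adj i j := i ≠ j ∧ ((i ∈ A ∧ j ∈ A) ∨ (i = i₀ ∧ j ∉ A) ∨ (j = i₀ ∧ i ∉ A))
  symm := by
    constructor
    rintro i j ⟨hne, h⟩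
    refine ⟨hne.symm, ?_⟩
    rcases h with h | h | h
    · exact Or.inl ⟨h.2, h.1⟩
    · exact Or.inr (Or.inr h)
    · exact Or.inr (Or.inl h)
  loopless := ⟨fun i h => h.1 rfl⟩

/-- The star on all agents centered at `i₀`. -/
def starAll (i₀ : I) : SimpleGraph I where
  Adj i j := i ≠ j ∧ (i = i₀ ∨ j = i₀)
  symm := ⟨fun i j h => ⟨h.1.symm, h.2.symm⟩⟩
  loopless := ⟨fun i h => h.1 rfl⟩

/-- The star on the agents in `A`, centered at `i₀`. -/
def starOn (A : Finset I) (i₀ : I) : SimpleGraph I where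
  Adj i j := i ≠ j ∧ (i = i₀ ∨ j = i₀) ∧ i ∈ A ∧ j ∈ A
  symm := ⟨fun i j h => ⟨h.1.symm, h.2.1.symm, h.2.2.2, h.2.2.1⟩⟩
  loopless := ⟨fun i h => h.1 rfl⟩

/-- Proposition 4(e): if the cost is large, every agent's attained maximum
one-period payoff over all networks is `0`, attained by any network in which
that agent is a singleton. -/
theorem prop4e {I : Type*} [Fintype I] [DecidableEq I]
    (A : Finset I) (fα fβ c δ : ℝ)
    (hA : 1 ≤ A.card) (hB : 1 ≤ Aᶜ.card)
    (hfαβ : fβ < fα) (hfβ : 0 < fβ) (hc : 0 < c)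
    (hδ0 : 0 < δ) (hδ1 : δ < 1)
    (h : c > max (max (fα + δ * (((A.card : ℝ) - 1) * fα + ((Aᶜ.card : ℝ) - 1) * fβ))
        (fα + δ * (((A.card : ℝ) - 2) * fα + (Aᶜ.card : ℝ) * fβ))) ((1 - δ) * fα)) :
    ∀ i : I,
      IsGreatest (Set.range fun g : SimpleGraph I => payoff (fTheta A fα fβ) c δ g i) 0 ∧
      ∀ g : SimpleGraph I, (∀ j : I, ¬ g.Adj i j) → payoff (fTheta A fα fβ) c δ g i = 0 := by
  intro i
  set f := fTheta A fα fβ with hf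
  have hfα : 0 < fα := lt_trans hfβ hfαβ
  have hfpos : ∀ j, 0 < f j := by
    intro j; rw [hf, fTheta]; split <;> [exact hfα; exact hfβ]
  have hfle : ∀ j, f j ≤ fα := by
    intro j; rw [hf]; unfold fTheta; split
    · exact le_rfl
    · exact hfαβ.le
  -- bounds from h
  have ht1 : fα + δ * (((A.card : ℝ) - 1) * fα + ((Aᶜ.card : ℝ) - 1) * fβ) < c :=
    lt_of_le_of_lt (le_trans (le_max_left _ _) (le_max_left _ _)) h
  have ht2 : fα + δ * (((A.card : ℝ) - 2) * fα + (Aᶜ.card : ℝ) * fβ) < c :=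
    lt_of_le_of_lt (le_trans (le_max_right _ _) (le_max_left _ _)) h
  have ht3 : (1 - δ) * fα < c := lt_of_le_of_lt (le_max_right _ _) h
  have hnα : (1:ℝ) ≤ (A.card : ℝ) := by exact_mod_cast hA
  have hnβ : (1:ℝ) ≤ (Aᶜ.card : ℝ) := by exact_mod_cast hB
  -- payoff is zero for singleton
  have hzero : ∀ g : SimpleGraph I, (∀ j : I, ¬ g.Adj i j) →
      payoff f c δ g i = 0 := by
    intro g hg
    have hR : (univ.filter fun j => j ≠ i ∧ g.Reachable i j) = ∅ := by
      apply Finset.filter_false_of_mem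
      rintro j - ⟨hj, hr⟩
      rcases hr with ⟨w⟩
      cases w with
      | nil => exact hj rfl
      | cons hadj p => exact hg _ hadj
    have hN : (univ.filter fun j => g.Adj i j) = ∅ := by
      apply Finset.filter_false_of_mem
      intro j _; exact hg j
    rw [payoff, Finset.filter_congr_decidable, hR, hN]; simp
  refine ⟨⟨⟨⊥, hzero ⊥ (fun j hj => hj)⟩, ?_⟩, hzero⟩
  rintro x ⟨g, rfl⟩
  show payoff f c δ g i ≤ 0
  by_cases hex : ∃ j, g.Adj i j
  swap
  · push_neg at hex
    exact le_of_eq (hzero g hex)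
  obtain ⟨j₁, hj₁⟩ := hex
  set Nbrs := univ.filter fun j => g.Adj i j with hNbrs
  set R := univ.filter fun j => j ≠ i ∧ g.Reachable i j with hRdef
  have hNR : Nbrs ⊆ R := by
    intro j hj
    rw [hNbrs, Finset.mem_filter] at hj
    rw [hRdef, Finset.mem_filter]
    exact ⟨Finset.mem_univ _, hj.2.ne', hj.2.reachable⟩
  have hj₁N : j₁ ∈ Nbrs := by rw [hNbrs, Finset.mem_filter]; exact ⟨Finset.mem_univ _, hj₁⟩
  set k := Nbrs.card with hk
  have hk1 : (1:ℝ) ≤ (k : ℝ) := by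
    have : 0 < k := Finset.card_pos.mpr ⟨j₁, hj₁N⟩
    exact_mod_cast this
  -- sums
  set S := ∑ j ∈ univ.erase i, f j with hS
  set N := ∑ j ∈ Nbrs, f j with hNsum
  -- benefit bound
  have hb1 : ∀ j ∈ Nbrs, δ ^ (g.dist i j - 1) * f j = f j := by
    intro j hj
    rw [hNbrs, Finset.mem_filter] at hj
    have : g.dist i j = 1 := SimpleGraph.dist_eq_one_iff_adj.mpr hj.2
    rw [this]; simp
  have hb2 : ∀ j ∈ R \ Nbrs, δ ^ (g.dist i j - 1) * f j ≤ δ * f j := by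
    intro j hj
    rw [Finset.mem_sdiff, hRdef, Finset.mem_filter, hNbrs, Finset.mem_filter] at hj
    obtain ⟨⟨-, hji, hr⟩, hnadj⟩ := hj
    have hd1 : g.dist i j ≠ 1 := fun hd =>
      hnadj ⟨Finset.mem_univ _, SimpleGraph.dist_eq_one_iff_adj.mp hd⟩
    have hdpos : 0 < g.dist i j := hr.pos_dist_of_ne (Ne.symm hji)
    have hd2 : 2 ≤ g.dist i j := by omega
    have : δ ^ (g.dist i j - 1) ≤ δ ^ 1 :=
      pow_le_pow_of_le_one hδ0.le hδ1.le (by omega)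
    have := mul_le_mul_of_nonneg_right this (hfpos j).le
    simpa using this
  have hsplit : ∑ j ∈ R, δ ^ (g.dist i j - 1) * f j
      = (∑ j ∈ R \ Nbrs, δ ^ (g.dist i j - 1) * f j) + N := by
    rw [hNsum, ← Finset.sum_congr rfl hb1]
    exact (Finset.sum_sdiff hNR).symm
  have hsub : R \ Nbrs ⊆ (univ.erase i) \ Nbrs := by
    intro j hj
    rw [Finset.mem_sdiff] at hj ⊢
    rw [hRdef, Finset.mem_filter] at hj
    exact ⟨Finset.mem_erase.mpr ⟨hj.1.2.1, Finset.mem_univ _⟩, hj.2⟩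
  have hNsubset : Nbrs ⊆ univ.erase i := by
    intro j hj
    rw [hNbrs, Finset.mem_filter] at hj
    exact Finset.mem_erase.mpr ⟨hj.2.ne', Finset.mem_univ _⟩
  have hbound2 : ∑ j ∈ R \ Nbrs, δ ^ (g.dist i j - 1) * f j ≤ δ * (S - N) := by
    calc ∑ j ∈ R \ Nbrs, δ ^ (g.dist i j - 1) * f j
        ≤ ∑ j ∈ R \ Nbrs, δ * f j := Finset.sum_le_sum hb2
      _ ≤ ∑ j ∈ (univ.erase i) \ Nbrs, δ * f j := by
          apply Finset.sum_le_sum_of_subset_of_nonneg hsub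
          intro j _ _; exact mul_nonneg hδ0.le (hfpos j).le
      _ = δ * (S - N) := by
          rw [← Finset.mul_sum]
          congr 1
          have := Finset.sum_sdiff (f := f) hNsubset
          rw [hS, hNsum]; linarith
  -- value of S
  have hStotal : ∑ j ∈ univ, f j = (A.card : ℝ) * fα + (Aᶜ.card : ℝ) * fβ := by
    have h1 : ∀ j ∈ A, f j = fα := fun j hj => by simp [hf, fTheta, hj]
    have h2 : ∀ j ∈ Aᶜ, f j = fβ := fun j hj => by
      simp [hf, fTheta, Finset.mem_compl.mp hj]
    rw [← Finset.sum_add_sum_compl A f, Finset.sum_congr rfl h1, Finset.sum_congr rfl h2,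
      Finset.sum_const, Finset.sum_const, nsmul_eq_mul, nsmul_eq_mul]
  have hSval : S = (A.card : ℝ) * fα + (Aᶜ.card : ℝ) * fβ - f i := by
    rw [hS, ← hStotal]
    have := Finset.add_sum_erase univ f (Finset.mem_univ i)
    linarith
  -- key inequality
  have hL1 : (1 - δ) * f j₁ + δ * S ≤ c := by
    rw [hSval, hf]
    unfold fTheta
    by_cases hiA : i ∈ A <;> by_cases hjA : j₁ ∈ A <;>
      simp only [hiA, hjA, if_true, if_false] <;>
      nlinarith [mul_nonneg (by linarith : (0:ℝ) ≤ 1 - δ) (by linarith : (0:ℝ) ≤ fα - fβ),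
        mul_pos hδ0 hfβ]
  -- bound on N
  have hNbound : N ≤ f j₁ + ((k:ℝ) - 1) * fα := by
    have h1 : N = f j₁ + ∑ j ∈ Nbrs.erase j₁, f j := by
      rw [hNsum]; exact (Finset.add_sum_erase Nbrs f hj₁N).symm
    have h2 : ∑ j ∈ Nbrs.erase j₁, f j ≤ ((Nbrs.erase j₁).card : ℝ) * fα := by
      calc ∑ j ∈ Nbrs.erase j₁, f j ≤ ∑ j ∈ Nbrs.erase j₁, fα :=
            Finset.sum_le_sum (fun j _ => hfle j)
        _ = ((Nbrs.erase j₁).card : ℝ) * fα := by rw [Finset.sum_const, nsmul_eq_mul]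
    have h3 : (Nbrs.erase j₁).card = k - 1 := Finset.card_erase_of_mem hj₁N
    have h4 : ((Nbrs.erase j₁).card : ℝ) = (k:ℝ) - 1 := by
      rw [h3]; have : 0 < k := Finset.card_pos.mpr ⟨j₁, hj₁N⟩
      push_cast [Nat.cast_sub this]; ring
    rw [h4] at h2
    linarith
  -- assemble
  rw [payoff, Finset.filter_congr_decidable, ← hRdef, ← hNbrs, ← hk]
  clear_value Nbrs R k S N
  have hfj₁ : 0 < f j₁ := hfpos j₁
  have hprod : ((k:ℝ) - 1) * ((1 - δ) * fα - c) ≤ 0 :=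
    mul_nonpos_of_nonneg_of_nonpos (by linarith) (by linarith)
  have h5 : (1 - δ) * N ≤ (1 - δ) * (f j₁ + ((k:ℝ) - 1) * fα) :=
    mul_le_mul_of_nonneg_left hNbound (by linarith)
  have hfinal : N + δ * (S - N) - (k:ℝ) * c ≤ 0 := by linarith [h5, hprod, hL1]
  calc (∑ j ∈ R, δ ^ (g.dist i j - 1) * f j) - (k : ℝ) * c
      ≤ (δ * (S - N) + N) - (k:ℝ) * c := by rw [hsplit]; linarith
    _ ≤ 0 := by linarith
end
end

section
/- Proposition 5(c): Suppose (1−δ)·f_α > c > (1−δ)·(f_α+f_β)/2 and (1+δ(n_α−1))·f_α + (1+δ(n_α+n_β−2))·f_β > 2c, and let g^e be the network consisting of all pairs of distinct type-α agents together with the edges {i₀, j} for every j ∈ B, for a fixed type-α agent i₀ ∈ A (the strongly efficient network of Theorem 2(c)). Then g^e is core-stable if and only if u_{i₀}(g^e) ≥ 0. -/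
open Finset

noncomputable section

open scoped Classical

variable {I : Type*}

/-- Per-vertex contribution to the payoff. -/
def pterm [Fintype I] (f : I → ℝ) (c δ : ℝ) (g : SimpleGraph I) (i j : I) : ℝ :=
  if g.Reachable i j ∧ j ≠ i then
    δ ^ (g.dist i j - 1) * f j - (if g.Adj i j then c else 0) else 0

lemma payoff_eq_sum [Fintype I] [DecidableEq I] (f : I → ℝ) (c δ : ℝ) (g : SimpleGraph I) (i : I) :
    payoff f c δ g i = ∑ j ∈ univ.erase i, pterm f c δ g i j := by
  have h1 : ∑ j ∈ univ.erase i, pterm f c δ g i j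
      = ∑ j ∈ univ.filter (fun j => j ≠ i ∧ g.Reachable i j),
          (δ ^ (g.dist i j - 1) * f j - (if g.Adj i j then c else 0)) := by
    rw [← Finset.sum_subset (s₁ := univ.filter (fun j => j ≠ i ∧ g.Reachable i j))
        (s₂ := univ.erase i) ?_ ?_]
    · refine Finset.sum_congr rfl ?_
      intro j hj
      simp only [Finset.mem_filter, Finset.mem_univ, true_and] at hj
      unfold pterm
      rw [if_pos ⟨hj.2, hj.1⟩]
    · intro j hj
      simp only [Finset.mem_filter, Finset.mem_univ, true_and] at hj
      simp [Finset.mem_erase, hj.1]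
    · intro j hj hnj
      simp only [Finset.mem_filter, Finset.mem_univ, true_and, not_and] at hnj
      simp only [Finset.mem_erase, Finset.mem_univ, and_true] at hj
      unfold pterm
      rw [if_neg]
      rintro ⟨hr, hne⟩
      exact hnj hne hr
  rw [h1, Finset.sum_sub_distrib]
  unfold payoff
  have h2 : ∑ j ∈ univ.filter (fun j => j ≠ i ∧ g.Reachable i j), (if g.Adj i j then c else 0)
      = ∑ j ∈ (univ.filter (fun j => j ≠ i ∧ g.Reachable i j)).filter (fun j => g.Adj i j), c :=
    (Finset.sum_filter _ _).symm
  have h3 : (univ.filter (fun j => j ≠ i ∧ g.Reachable i j)).filter (fun j => g.Adj i j)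
      = univ.filter (fun j => g.Adj i j) := by
    ext j
    simp only [Finset.mem_filter, Finset.mem_univ, true_and]
    exact ⟨fun h => h.2, fun h => ⟨⟨h.ne', h.reachable⟩, h⟩⟩
  congr 1
  · apply Finset.sum_congr _ fun x _ => rfl
    ext j; simp only [Finset.mem_filter]
  · rw [h2, h3, Finset.sum_const, nsmul_eq_mul, mul_comm]

lemma pterm_of_adj [Fintype I] {f : I → ℝ} {c δ : ℝ} {g : SimpleGraph I} {i j : I}
    (h : g.Adj i j) : pterm f c δ g i j = f j - c := by
  have hd : g.dist i j = 1 := SimpleGraph.dist_eq_one_iff_adj.2 h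
  unfold pterm
  rw [if_pos ⟨h.reachable, h.ne'⟩, if_pos h, hd]
  norm_num

lemma two_le_dist {g : SimpleGraph I} {i j : I}
    (hne : j ≠ i) (hr : g.Reachable i j) (h : ¬ g.Adj i j) : 2 ≤ g.dist i j := by
  have h0 : 0 < g.dist i j := hr.pos_dist_of_ne (Ne.symm hne)
  have h1 : g.dist i j ≠ 1 := fun h1 => h (SimpleGraph.dist_eq_one_iff_adj.1 h1)
  omega

lemma pterm_of_nonadj [Fintype I] {f : I → ℝ} {c δ : ℝ} {g : SimpleGraph I} {i j : I}
    (hδ0 : 0 < δ) (hδ1 : δ < 1) (hf : 0 < f j)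
    (h : ¬ g.Adj i j) : pterm f c δ g i j ≤ δ * f j := by
  unfold pterm
  split
  · rename_i hc
    rw [sub_zero]
    have h2 : 2 ≤ g.dist i j := two_le_dist hc.2 hc.1 h
    have : δ ^ (g.dist i j - 1) ≤ δ ^ 1 := by
      apply pow_le_pow_of_le_one hδ0.le hδ1.le
      omega
    rw [pow_one] at this
    exact mul_le_mul_of_nonneg_right this hf.le
  · positivity

lemma pterm_of_not_reach [Fintype I] {f : I → ℝ} {c δ : ℝ} {g : SimpleGraph I} {i j : I}
    (h : ¬ g.Reachable i j) : pterm f c δ g i j = 0 := by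
  unfold pterm
  rw [if_neg (fun hc => h hc.1)]

lemma pterm_reach_of_pos [Fintype I] {f : I → ℝ} {c δ : ℝ} {g : SimpleGraph I} {i j : I}
    (h : 0 < pterm f c δ g i j) : g.Reachable i j := by
  by_contra hr
  rw [pterm_of_not_reach hr] at h
  exact lt_irrefl _ h

lemma walk_mem_of_edges_in {g' : SimpleGraph I} {I' : Finset I}
    (hE : ∀ i j : I, g'.Adj i j → i ∈ I' ∧ j ∈ I') :
    ∀ {a j : I}, g'.Walk a j → a ∈ I' → j ∈ I' := by
  intro a j w
  induction w with
  | nil => exact id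
  | cons h _ ih => exact fun ha => ih (hE _ _ h).2

lemma reach_mem_of_edges_in {g' : SimpleGraph I} {I' : Finset I}
    (hE : ∀ i j : I, g'.Adj i j → i ∈ I' ∧ j ∈ I')
    {a j : I} (ha : a ∈ I') (h : g'.Reachable a j) : j ∈ I' := by
  obtain ⟨w⟩ := h
  exact walk_mem_of_edges_in hE w ha

lemma sum_le_forced {s : Finset I} {f g : I → ℝ} (h : ∀ j ∈ s, f j ≤ g j)
    (hs : ∑ j ∈ s, g j ≤ ∑ j ∈ s, f j) : ∀ j ∈ s, f j = g j := by
  intro j hj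
  by_contra hne
  have := Finset.sum_lt_sum h ⟨j, hj, lt_of_le_of_ne (h j hj) hne⟩
  linarith

lemma coreStar_adj_iff {A : Finset I} {i₀ : I} {i j : I} :
    (coreStar A i₀).Adj i j ↔
      i ≠ j ∧ ((i ∈ A ∧ j ∈ A) ∨ (i = i₀ ∧ j ∉ A) ∨ (j = i₀ ∧ i ∉ A)) := Iff.rfl

lemma coreStar_adj_center {A : Finset I} {i₀ : I} (hi₀ : i₀ ∈ A) {x : I}
    (hx : x ≠ i₀) : (coreStar A i₀).Adj x i₀ := by
  by_cases hxA : x ∈ A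
  · exact ⟨hx, Or.inl ⟨hxA, hi₀⟩⟩
  · exact ⟨hx, Or.inr (Or.inr ⟨rfl, hxA⟩)⟩

lemma coreStar_dist_two {A : Finset I} {i₀ : I} (hi₀ : i₀ ∈ A) {i j : I}
    (hne : i ≠ j) (hnadj : ¬ (coreStar A i₀).Adj i j) :
    (coreStar A i₀).Reachable i j ∧ (coreStar A i₀).dist i j = 2 := by
  have hii₀ : i ≠ i₀ := by
    rintro rfl
    by_cases hjA : j ∈ A
    · exact hnadj ⟨hne, Or.inl ⟨hi₀, hjA⟩⟩
    · exact hnadj ⟨hne, Or.inr (Or.inl ⟨rfl, hjA⟩)⟩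
  have hji₀ : j ≠ i₀ := by
    rintro rfl
    exact hnadj (coreStar_adj_center hi₀ hii₀)
  have h1 : (coreStar A i₀).Adj i i₀ := coreStar_adj_center hi₀ hii₀
  have h2 : (coreStar A i₀).Adj i₀ j := ((coreStar_adj_center hi₀ hji₀).symm)
  let w : (coreStar A i₀).Walk i j := SimpleGraph.Walk.cons h1 h2.toWalk
  have hlen : w.length = 2 := rfl
  have hr : (coreStar A i₀).Reachable i j := ⟨w⟩
  refine ⟨hr, ?_⟩
  have hle : (coreStar A i₀).dist i j ≤ 2 := hlen ▸ SimpleGraph.dist_le w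
  have := two_le_dist (Ne.symm hne) hr hnadj
  omega

lemma pterm_coreStar [Fintype I] {f : I → ℝ} {c δ : ℝ} {A : Finset I} {i₀ : I}
    (hi₀ : i₀ ∈ A) {i j : I} (hj : j ≠ i) :
    pterm f c δ (coreStar A i₀) i j
      = if (coreStar A i₀).Adj i j then f j - c else δ * f j := by
  by_cases hadj : (coreStar A i₀).Adj i j
  · rw [if_pos hadj, pterm_of_adj hadj]
  · rw [if_neg hadj]
    obtain ⟨hr, hd⟩ := coreStar_dist_two hi₀ (Ne.symm hj) hadj
    unfold pterm
    rw [if_pos ⟨hr, hj⟩, if_neg hadj, hd]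
    norm_num

/-- Proposition 5(c): under the conditions of Theorem 2(c), the strongly
efficient network is core-stable iff the hub `i₀` gets a non-negative payoff. -/
theorem prop5c {I : Type*} [Fintype I] [DecidableEq I]
    (A : Finset I) (fα fβ c δ : ℝ)
    (hA : 1 ≤ A.card) (hB : 1 ≤ Aᶜ.card)
    (hfαβ : fβ < fα) (hfβ : 0 < fβ) (hc : 0 < c)
    (hδ0 : 0 < δ) (hδ1 : δ < 1)
    (h1 : (1 - δ) * fα > c) (h2 : c > (1 - δ) * ((fα + fβ) / 2))
    (h3 : (1 + δ * ((A.card : ℝ) - 1)) * fα + (1 + δ * ((A.card : ℝ) + (Aᶜ.card : ℝ) - 2)) * fβ > 2 * c)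
    (i₀ : I) (hi₀ : i₀ ∈ A) :
    CoreStable (fTheta A fα fβ) c δ (coreStar A i₀) ↔
      payoff (fTheta A fα fβ) c δ (coreStar A i₀) i₀ ≥ 0 := by
  set F := fTheta A fα fβ with hF
  set g := coreStar A i₀ with hg
  -- numeric facts
  have hfα : 0 < fα := lt_trans hfβ hfαβ
  have hδ1' : 0 < 1 - δ := by linarith
  have hδfα_lt : δ * fα < fα - c := by nlinarith
  have hfβc_lt : fβ - c < δ * fβ := by nlinarith [mul_pos hδ1' (sub_pos.2 hfαβ)]
  have hfαc_pos : 0 < fα - c := by nlinarith [mul_pos hδ0 hfα]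
  have hδfβ_pos : 0 < δ * fβ := mul_pos hδ0 hfβ
  have hδfα_pos : 0 < δ * fα := mul_pos hδ0 hfα
  have hF_pos : ∀ j, 0 < F j := by
    intro j; rw [hF]; unfold fTheta; split <;> [exact hfα; exact hfβ]
  have hFA : ∀ j ∈ A, F j = fα := by intro j hj; rw [hF]; unfold fTheta; rw [if_pos hj]
  have hFB : ∀ j ∉ A, F j = fβ := by intro j hj; rw [hF]; unfold fTheta; rw [if_neg hj]
  constructor
  · -- core-stable → payoff i₀ ≥ 0
    intro hcs
    by_contra hneg
    push_neg at hneg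
    refine absurd ?_ hcs
    refine ⟨{i₀}, ⊥, ?_, ?_, ⟨i₀, Finset.mem_singleton_self i₀, ?_⟩⟩
    · intro i j hadj; exact absurd hadj (by simp)
    · intro i hi
      rw [Finset.mem_singleton] at hi; subst hi
      have hp : payoff F c δ (⊥ : SimpleGraph I) i = 0 := by
        rw [payoff_eq_sum]
        apply Finset.sum_eq_zero
        intro j hj
        exact pterm_of_not_reach (by
          rw [SimpleGraph.reachable_bot]
          exact fun h => (Finset.mem_erase.1 hj).1 h.symm)
      rw [hp]
      exact hneg.le
    · have hp : payoff F c δ (⊥ : SimpleGraph I) i₀ = 0 := by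
        rw [payoff_eq_sum]
        apply Finset.sum_eq_zero
        intro j hj
        exact pterm_of_not_reach (by
          rw [SimpleGraph.reachable_bot]
          exact fun h => (Finset.mem_erase.1 hj).1 h.symm)
      rw [hp]; exact hneg
  · -- payoff i₀ ≥ 0 → core-stable
    intro h0
    rintro ⟨I', g', hE, hweak, istar, histarI, hstrict⟩
    -- generic upper bound on pterm in any graph
    have hpterm_le_M : ∀ (g'' : SimpleGraph I) (i j : I),
        pterm F c δ g'' i j ≤ (if j ∈ A then fα - c else δ * fβ) := by
      intro g'' i j
      by_cases hadj : g''.Adj i j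
      · rw [pterm_of_adj hadj]
        by_cases hjA : j ∈ A
        · rw [if_pos hjA, hFA j hjA]
        · rw [if_neg hjA, hFB j hjA]; linarith
      · refine le_trans (pterm_of_nonadj hδ0 hδ1 (hF_pos j) hadj) ?_
        by_cases hjA : j ∈ A
        · rw [if_pos hjA, hFA j hjA]; linarith
        · rw [if_neg hjA, hFB j hjA]
    -- exact pterm values in g for a non-center member of A
    have hga : ∀ a ∈ A, a ≠ i₀ → ∀ j, j ≠ a →
        pterm F c δ g a j = (if j ∈ A then fα - c else δ * fβ) := by
      intro a haA hai j hj
      rw [hg, pterm_coreStar hi₀ hj]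
      by_cases hjA : j ∈ A
      · have hadj : (coreStar A i₀).Adj a j := ⟨Ne.symm hj, Or.inl ⟨haA, hjA⟩⟩
        rw [if_pos hadj, if_pos hjA, hFA j hjA]
      · have hnadj : ¬ (coreStar A i₀).Adj a j := by
          rintro ⟨-, ⟨-, h⟩ | ⟨h, -⟩ | ⟨h, ha⟩⟩
          · exact hjA h
          · exact hai h
          · exact ha haA
        rw [if_neg hnadj, if_neg hjA, hFB j hjA]
    -- exact pterm values in g for a member of B
    have hgb : ∀ b, b ∉ A → ∀ j, j ≠ b →
        pterm F c δ g b j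
          = (if j ∈ A then (if j = i₀ then fα - c else δ * fα) else δ * fβ) := by
      intro b hbA j hj
      have hbi₀ : b ≠ i₀ := fun h => hbA (h ▸ hi₀)
      rw [hg, pterm_coreStar hi₀ hj]
      by_cases hji : j = i₀
      · have hjA : j ∈ A := by rw [hji]; exact hi₀
        have hadj : (coreStar A i₀).Adj b j := by rw [hji]; exact coreStar_adj_center hi₀ hbi₀
        rw [if_pos hadj, if_pos hjA, if_pos hji, hFA j hjA]
      · have hnadj : ¬ (coreStar A i₀).Adj b j := by
          rintro ⟨-, ⟨h, -⟩ | ⟨h, -⟩ | ⟨h, -⟩⟩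
          · exact hbA h
          · exact hbi₀ h
          · exact hji h
        rw [if_neg hnadj]
        by_cases hjA : j ∈ A
        · rw [if_pos hjA, if_neg hji, hFA j hjA]
        · rw [if_neg hjA, hFB j hjA]
    -- extraction for members of A \ {i₀}
    have hextractA : ∀ a ∈ I', a ∈ A → a ≠ i₀ → ∀ j ∈ Finset.univ.erase a,
        pterm F c δ g' a j = (if j ∈ A then fα - c else δ * fβ) := by
      intro a haI haA hai
      apply sum_le_forced
      · intro j _; exact hpterm_le_M g' a j
      · have hw := hweak a haI
        rw [payoff_eq_sum, payoff_eq_sum] at hw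
        calc ∑ j ∈ Finset.univ.erase a, (if j ∈ A then fα - c else δ * fβ)
            = ∑ j ∈ Finset.univ.erase a, pterm F c δ g a j :=
              Finset.sum_congr rfl (fun j hj => (hga a haA hai j (Finset.mem_erase.1 hj).1).symm)
          _ ≤ ∑ j ∈ Finset.univ.erase a, pterm F c δ g' a j := hw
    have hAstruct : ∀ a ∈ I', a ∈ A → a ≠ i₀ → ∀ j, j ≠ a →
        ((j ∈ A → g'.Adj a j) ∧ (j ∉ A → ¬ g'.Adj a j ∧ g'.Reachable a j)) := by
      intro a haI haA hai j hj
      have h4 := hextractA a haI haA hai j (Finset.mem_erase.2 ⟨hj, Finset.mem_univ j⟩)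
      constructor
      · intro hjA
        rw [if_pos hjA] at h4
        by_contra hnadj
        have hb := pterm_of_nonadj (c := c) hδ0 hδ1 (hF_pos j) hnadj
        rw [h4, hFA j hjA] at hb
        linarith
      · intro hjA
        rw [if_neg hjA] at h4
        have hnadj : ¬ g'.Adj a j := by
          intro hadj
          rw [pterm_of_adj hadj, hFB j hjA] at h4
          linarith
        exact ⟨hnadj, pterm_reach_of_pos (h4 ▸ hδfβ_pos)⟩
    -- extraction for members of B, given an upper bound on terms from A \ {i₀}
    have hextractB : ∀ b ∈ I', b ∉ A →
        (∀ j, j ≠ b → j ∈ A → j ≠ i₀ → pterm F c δ g' b j ≤ δ * fα) →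
        ∀ j ∈ Finset.univ.erase b,
          pterm F c δ g' b j
            = (if j ∈ A then (if j = i₀ then fα - c else δ * fα) else δ * fβ) := by
      intro b hbI hbA hbound
      apply sum_le_forced
      · intro j hj
        have hjb := (Finset.mem_erase.1 hj).1
        by_cases hjA : j ∈ A
        · by_cases hji : j = i₀
          · rw [if_pos hjA, if_pos hji]
            have := hpterm_le_M g' b j
            rwa [if_pos hjA] at this
          · rw [if_pos hjA, if_neg hji]
            exact hbound j hjb hjA hji
        · rw [if_neg hjA]
          have := hpterm_le_M g' b j
          rwa [if_neg hjA] at this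
      · have hw := hweak b hbI
        rw [payoff_eq_sum, payoff_eq_sum] at hw
        calc ∑ j ∈ Finset.univ.erase b,
              (if j ∈ A then (if j = i₀ then fα - c else δ * fα) else δ * fβ)
            = ∑ j ∈ Finset.univ.erase b, pterm F c δ g b j :=
              Finset.sum_congr rfl (fun j hj => (hgb b hbA j (Finset.mem_erase.1 hj).1).symm)
          _ ≤ ∑ j ∈ Finset.univ.erase b, pterm F c δ g' b j := hw
    have hBderive : ∀ b, b ∉ A →
        (∀ j ∈ Finset.univ.erase b,
          pterm F c δ g' b j
            = (if j ∈ A then (if j = i₀ then fα - c else δ * fα) else δ * fβ)) →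
        (g'.Adj b i₀ ∧ (∀ j, j ∉ A → j ≠ b → ¬ g'.Adj b j ∧ g'.Reachable b j)
          ∧ (∀ j ∈ A, j ≠ i₀ → g'.Reachable b j)) := by
      intro b hbA h4
      have hbi₀ : b ≠ i₀ := fun h => hbA (h ▸ hi₀)
      refine ⟨?_, ?_, ?_⟩
      · have h5 := h4 i₀ (Finset.mem_erase.2 ⟨Ne.symm hbi₀, Finset.mem_univ i₀⟩)
        rw [if_pos hi₀, if_pos rfl] at h5
        by_contra hnadj
        have hb := pterm_of_nonadj (c := c) hδ0 hδ1 (hF_pos i₀) hnadj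
        rw [h5, hFA i₀ hi₀] at hb
        linarith
      · intro j hjA hjb
        have h5 := h4 j (Finset.mem_erase.2 ⟨hjb, Finset.mem_univ j⟩)
        rw [if_neg hjA] at h5
        have hnadj : ¬ g'.Adj b j := by
          intro hadj
          rw [pterm_of_adj hadj, hFB j hjA] at h5
          linarith
        exact ⟨hnadj, pterm_reach_of_pos (h5 ▸ hδfβ_pos)⟩
      · intro j hjA hji
        have hjb : j ≠ b := fun h => hbA (h ▸ hjA)
        have h5 := h4 j (Finset.mem_erase.2 ⟨hjb, Finset.mem_univ j⟩)
        rw [if_pos hjA, if_neg hji] at h5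
        exact pterm_reach_of_pos (h5 ▸ hδfα_pos)
    -- main case analysis
    by_cases hA2 : ∃ a ∈ I', a ∈ A ∧ a ≠ i₀
    · obtain ⟨a₀, ha₀I, ha₀A, ha₀i⟩ := hA2
      have hIuniv : ∀ x, x ∈ I' := by
        intro x
        by_cases hxa : x = a₀
        · exact hxa ▸ ha₀I
        · have hs := hAstruct a₀ ha₀I ha₀A ha₀i x hxa
          by_cases hxA : x ∈ A
          · exact (hE a₀ x (hs.1 hxA)).2
          · exact reach_mem_of_edges_in hE ha₀I (hs.2 hxA).2
      have hAall : ∀ a ∈ A, a ≠ i₀ → ∀ j, j ≠ a →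
          ((j ∈ A → g'.Adj a j) ∧ (j ∉ A → ¬ g'.Adj a j ∧ g'.Reachable a j)) :=
        fun a haA hai => hAstruct a (hIuniv a) haA hai
      have hBall : ∀ b, b ∉ A →
          (g'.Adj b i₀ ∧ (∀ j, j ∉ A → j ≠ b → ¬ g'.Adj b j ∧ g'.Reachable b j)) := by
        intro b hbA
        have hbound : ∀ j, j ≠ b → j ∈ A → j ≠ i₀ → pterm F c δ g' b j ≤ δ * fα := by
          intro j hjb hjA hji
          have hnadj : ¬ g'.Adj b j := by
            intro h
            exact ((hAall j hjA hji b (fun e => hbA (e ▸ hjA))).2 hbA).1 h.symm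
          have := pterm_of_nonadj (c := c) hδ0 hδ1 (hF_pos j) hnadj
          rwa [hFA j hjA] at this
        have h4 := hextractB b (hIuniv b) hbA hbound
        exact ⟨(hBderive b hbA h4).1, (hBderive b hbA h4).2.1⟩
      have hg'_eq : g' = g := by
        ext i j
        constructor
        · intro h
          have hne : i ≠ j := h.ne
          by_cases hiA : i ∈ A <;> by_cases hjA : j ∈ A
          · exact ⟨hne, Or.inl ⟨hiA, hjA⟩⟩
          · by_cases hii : i = i₀
            · exact ⟨hne, Or.inr (Or.inl ⟨hii, hjA⟩)⟩
            · exact absurd h ((hAall i hiA hii j (Ne.symm hne)).2 hjA).1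
          · by_cases hji : j = i₀
            · exact ⟨hne, Or.inr (Or.inr ⟨hji, hiA⟩)⟩
            · exact absurd h.symm ((hAall j hjA hji i hne).2 hiA).1
          · exact absurd h ((hBall i hiA).2 j hjA (Ne.symm hne)).1
        · rintro ⟨hne, ⟨hiA, hjA⟩ | ⟨hii, hjA⟩ | ⟨hji, hiA⟩⟩
          · by_cases hii : i = i₀
            · have hji : j ≠ i₀ := fun h => hne (by rw [hii, h])
              exact ((hAall j hjA hji i hne).1 hiA).symm
            · exact (hAall i hiA hii j (Ne.symm hne)).1 hjA
          · rw [hii]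
            exact ((hBall j hjA).1).symm
          · rw [hji]
            exact (hBall i hiA).1
      rw [hg'_eq] at hstrict
      exact lt_irrefl _ hstrict
    · push_neg at hA2
      by_cases hB2 : ∃ b ∈ I', b ∉ A
      · obtain ⟨b₀, hb₀I, hb₀A⟩ := hB2
        have hbound₀ : ∀ j, j ≠ b₀ → j ∈ A → j ≠ i₀ → pterm F c δ g' b₀ j ≤ δ * fα := by
          intro j hjb hjA hji
          have hnr : ¬ g'.Reachable b₀ j :=
            fun hr => hji (hA2 j (reach_mem_of_edges_in hE hb₀I hr) hjA)
          rw [pterm_of_not_reach hnr]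
          positivity
        have h4 := hextractB b₀ hb₀I hb₀A hbound₀
        have hD := hBderive b₀ hb₀A h4
        by_cases hA1 : ∃ j ∈ A, j ≠ i₀
        · obtain ⟨j, hjA, hji⟩ := hA1
          have hr := hD.2.2 j hjA hji
          exact hji (hA2 j (reach_mem_of_edges_in hE hb₀I hr) hjA)
        · push_neg at hA1
          have hIuniv : ∀ x, x ∈ I' := by
            intro x
            by_cases hxb : x = b₀
            · exact hxb ▸ hb₀I
            · by_cases hxA : x ∈ A
              · rw [hA1 x hxA]; exact (hE b₀ i₀ hD.1).2
              · exact reach_mem_of_edges_in hE hb₀I (hD.2.1 x hxA hxb).2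
          have hBall : ∀ b, b ∉ A →
              (g'.Adj b i₀ ∧ (∀ j, j ∉ A → j ≠ b → ¬ g'.Adj b j ∧ g'.Reachable b j)) := by
            intro b hbA
            have hbound : ∀ j, j ≠ b → j ∈ A → j ≠ i₀ → pterm F c δ g' b j ≤ δ * fα :=
              fun j _ hjA hji => absurd (hA1 j hjA) hji
            have h4b := hextractB b (hIuniv b) hbA hbound
            exact ⟨(hBderive b hbA h4b).1, (hBderive b hbA h4b).2.1⟩
          have hg'_eq : g' = g := by
            ext i j
            constructor
            · intro h
              have hne : i ≠ j := h.ne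
              by_cases hiA : i ∈ A <;> by_cases hjA : j ∈ A
              · exact absurd ((hA1 i hiA).trans (hA1 j hjA).symm) hne
              · exact ⟨hne, Or.inr (Or.inl ⟨hA1 i hiA, hjA⟩)⟩
              · exact ⟨hne, Or.inr (Or.inr ⟨hA1 j hjA, hiA⟩)⟩
              · exact absurd h ((hBall i hiA).2 j hjA (Ne.symm hne)).1
            · rintro ⟨hne, ⟨hiA, hjA⟩ | ⟨hii, hjA⟩ | ⟨hji, hiA⟩⟩
              · exact absurd ((hA1 i hiA).trans (hA1 j hjA).symm) hne
              · rw [hii]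
                exact ((hBall j hjA).1).symm
              · rw [hji]
                exact (hBall i hiA).1
          rw [hg'_eq] at hstrict
          exact lt_irrefl _ hstrict
      · push_neg at hB2
        have histar : istar = i₀ := hA2 istar histarI (hB2 istar histarI)
        have hnoadj : ∀ x y, ¬ g'.Adj x y := by
          intro x y h
          obtain ⟨hx, hy⟩ := hE x y h
          exact h.ne ((hA2 x hx (hB2 x hx)).trans (hA2 y hy (hB2 y hy)).symm)
        have hp0 : payoff F c δ g' i₀ = 0 := by
          rw [payoff_eq_sum]
          apply Finset.sum_eq_zero
          intro j hj
          apply pterm_of_not_reach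
          intro hr
          obtain ⟨w⟩ := hr
          cases w with
          | nil => exact (Finset.mem_erase.1 hj).1 rfl
          | cons h _ => exact hnoadj _ _ h
        rw [histar, hp0] at hstrict
        exact absurd h0 (not_le.2 (histar ▸ hstrict))
end
end

section
/- Proposition 5(d): Suppose (1−δ)·f_α > c > (1−δ)·(f_α+f_β)/2 and (1+δ(n_α−1))·f_α + (1+δ(n_α+n_β−2))·f_β < 2c, and let g^e be the network whose edges are exactly all pairs of distinct type-α agents (the strongly efficient network of Theorem 2(d)). Then g^e is core-stable. -/
open Finset

noncomputable section

open scoped Classical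

variable {I : Type*}

lemma payoff_eq [Fintype I] [DecidableEq I] (f : I → ℝ) (c δ : ℝ) (g : SimpleGraph I) (i : I) :
    payoff f c δ g i
      = (∑ j ∈ univ.filter fun j => j ≠ i ∧ g.Reachable i j, δ ^ (g.dist i j - 1) * f j)
        - ((univ.filter fun j => g.Adj i j).card : ℝ) * c := by
  unfold payoff
  congr!

lemma reachable_eq_of_isolated {g : SimpleGraph I} {i : I}
    (h : ∀ j, ¬ g.Adj i j) {j : I} (hr : g.Reachable i j) : j = i := by
  obtain ⟨w⟩ := hr
  cases w with
  | nil => rfl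
  | cons h' _ => exact absurd h' (h _)

lemma payoff_eq_zero_of_isolated [Fintype I] (f : I → ℝ) (c δ : ℝ) {g : SimpleGraph I} {i : I}
    (h : ∀ j, ¬ g.Adj i j) : payoff f c δ g i = 0 := by
  unfold payoff
  have h1 : (univ.filter fun j => j ≠ i ∧ g.Reachable i j) = (∅ : Finset I) := by
    ext j
    simp only [mem_filter, mem_univ, true_and, notMem_empty, iff_false, not_and]
    intro hne hr
    exact hne (reachable_eq_of_isolated h hr)
  have h2 : (univ.filter fun j => g.Adj i j) = (∅ : Finset I) := by
    ext j; simp [h j]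
  rw [h1, h2]; simp

/-- Per-agent payoff bound: direct links give `(1-δ)f j - c` each, and every
other potential partner (non-isolated, ≠ i) contributes at most `δ f j`. -/
lemma payoff_le_bound [Fintype I] [DecidableEq I] (f : I → ℝ) (c δ : ℝ)
    (hf : ∀ j, 0 < f j) (hδ0 : 0 < δ) (hδ1 : δ < 1)
    (g' : SimpleGraph I) (V₁ : Finset I)
    (hV₁ : ∀ j k, g'.Adj j k → j ∈ V₁) (i : I) :
    payoff f c δ g' i ≤ (∑ j ∈ univ.filter fun j => g'.Adj i j, ((1 - δ) * f j - c))
      + δ * ∑ j ∈ V₁.erase i, f j := by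
  rw [payoff_eq]
  set N := univ.filter (fun j => g'.Adj i j) with hN
  set R := univ.filter (fun j => j ≠ i ∧ g'.Reachable i j) with hR
  have hNR : N ⊆ R := by
    intro j hj
    simp only [hN, hR, mem_filter, mem_univ, true_and] at hj ⊢
    exact ⟨hj.ne', hj.reachable⟩
  have hRV : R ⊆ V₁.erase i := by
    intro j hj
    simp only [hR, mem_filter, mem_univ, true_and] at hj
    obtain ⟨hne, hr⟩ := hj
    refine mem_erase.mpr ⟨hne, ?_⟩
    obtain ⟨w⟩ := hr.symm
    cases w with
    | nil => exact absurd rfl hne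
    | cons h' _ => exact hV₁ _ _ h'
  have hNV : N ⊆ V₁.erase i := hNR.trans hRV
  have hsum : (∑ j ∈ R, δ ^ (g'.dist i j - 1) * f j)
      ≤ (∑ j ∈ N, f j) + δ * ∑ j ∈ (V₁.erase i) \ N, f j := by
    rw [← Finset.sum_sdiff hNR]
    have hpart1 : ∑ j ∈ R \ N, δ ^ (g'.dist i j - 1) * f j
        ≤ δ * ∑ j ∈ (V₁.erase i) \ N, f j := by
      rw [Finset.mul_sum]
      calc ∑ j ∈ R \ N, δ ^ (g'.dist i j - 1) * f j
          ≤ ∑ j ∈ R \ N, δ * f j := by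
            apply Finset.sum_le_sum
            intro j hj
            have hjR := (Finset.mem_sdiff.mp hj).1
            have hjN := (Finset.mem_sdiff.mp hj).2
            simp only [hR, mem_filter, mem_univ, true_and] at hjR
            have hnadj : ¬ g'.Adj i j := by
              intro hadj
              exact hjN (by simp [hN, hadj])
            have hd0 : g'.dist i j ≠ 0 := by
              rw [SimpleGraph.dist_ne_zero_iff_ne_and_reachable]
              exact ⟨hjR.1.symm, hjR.2⟩
            have hd1 : g'.dist i j ≠ 1 := fun h =>
              hnadj (SimpleGraph.dist_eq_one_iff_adj.mp h)
            have h2d : 1 ≤ g'.dist i j - 1 := by omega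
            have : δ ^ (g'.dist i j - 1) ≤ δ ^ 1 :=
              pow_le_pow_of_le_one hδ0.le hδ1.le h2d
            rw [pow_one] at this
            exact mul_le_mul_of_nonneg_right this (hf j).le
        _ ≤ ∑ j ∈ (V₁.erase i) \ N, δ * f j := by
            apply Finset.sum_le_sum_of_subset_of_nonneg
            · exact Finset.sdiff_subset_sdiff hRV Finset.Subset.rfl
            · intro j _ _
              exact mul_nonneg hδ0.le (hf j).le
    have hpart2 : ∑ j ∈ N, δ ^ (g'.dist i j - 1) * f j ≤ ∑ j ∈ N, f j := by
      apply Finset.sum_le_sum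
      intro j _
      have h1 : δ ^ (g'.dist i j - 1) ≤ 1 := pow_le_one₀ hδ0.le hδ1.le
      nlinarith [hf j]
    linarith
  have hsplit : ∑ j ∈ (V₁.erase i) \ N, f j = ∑ j ∈ V₁.erase i, f j - ∑ j ∈ N, f j :=
    Finset.sum_sdiff_eq_sub hNV
  have hgoal : ∑ j ∈ N, ((1 - δ) * f j - c)
      = (∑ j ∈ N, f j) - δ * (∑ j ∈ N, f j) - (N.card : ℝ) * c := by
    rw [Finset.sum_sub_distrib, Finset.sum_const, nsmul_eq_mul, ← Finset.mul_sum]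
    ring
  rw [hsplit] at hsum
  linarith [hsum]

/-- The purely numerical heart of Proposition 5(d). -/
lemma numeric_core (fα fβ c δ a s k na nb m1 m3 m4 : ℝ)
    (hfαβ : fβ < fα) (hfβ : 0 < fβ) (hδ0 : 0 < δ) (hδ1 : δ < 1)
    (h1 : (1 - δ) * fα > c)
    (h3 : (1 + δ * (na - 1)) * fα + (1 + δ * (na + nb - 2)) * fβ < 2 * c)
    (ha0 : 0 ≤ a) (hs0 : 0 ≤ s) (hk0 : 0 ≤ k)
    (hm10 : 0 ≤ m1) (hm30 : 0 ≤ m3) (hm40 : 0 ≤ m4)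
    (hm1R : m1 + a ≤ a * a) (hm34 : s ≤ m3 + m4)
    (hak : a ≤ k) (hkn : k ≤ na) (hsb : s ≤ nb) (hna1 : 1 ≤ na) (hnb1 : 1 ≤ nb)
    (hcase : a = 0 ∨ 1 ≤ a) :
    (m1 + m3) * ((1 - δ) * fα - c) + (m3 + m4) * ((1 - δ) * fβ - c)
      + δ * ((a + s) - 1) * (a * fα + s * fβ)
      ≤ k * (na - 1) * (fα - c) := by
  set pa := (1 - δ) * fα - c with hpa
  set pb := (1 - δ) * fβ - c with hpb
  set R := na * fα + (na + nb - 1) * fβ with hRdef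
  have hpa_pos : 0 < pa := by rw [hpa]; linarith
  have hfc_pos : 0 < fα - c := by
    have hd := mul_pos hδ0 (hfβ.trans hfαβ)
    rw [hpa] at hpa_pos
    linarith [hpa_pos, hd]
  have hR_pos : 0 < R := by
    rw [hRdef]
    have e1 : 0 < na * fα := mul_pos (lt_of_lt_of_le one_pos hna1) (hfβ.trans hfαβ)
    have e2 : 0 < (na + nb - 1) * fβ := mul_pos (by linarith) hfβ
    linarith
  have A1 : pa + pb + δ * R < 0 := by
    rw [hpa, hpb, hRdef]
    linarith [h3]
  have A3 : pb + δ * R < 0 := by linarith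
  have A4 : a * fα + (a + s - 1) * fβ ≤ R := by
    rw [hRdef]
    have e1 : 0 ≤ (na - a) * fα := mul_nonneg (by linarith) (hfβ.trans hfαβ).le
    have e2 : 0 ≤ (na + nb - 1 - (a + s - 1)) * fβ := mul_nonneg (by linarith) hfβ.le
    linarith [e1, e2]
  have A6 : m3 * pa + m3 * pb + m4 * pb + δ * s * (a * fα + (a + s - 1) * fβ) ≤ 0 := by
    have c1 : δ * s * (a * fα + (a + s - 1) * fβ) ≤ δ * s * R :=
      mul_le_mul_of_nonneg_left A4 (mul_nonneg hδ0.le hs0)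
    have c2 : δ * s * R ≤ δ * (m3 + m4) * R := by
      have h := mul_nonneg (mul_nonneg hδ0.le (by linarith : (0:ℝ) ≤ m3 + m4 - s)) hR_pos.le
      linarith [h]
    have c3 : m3 * (pa + pb + δ * R) ≤ 0 :=
      mul_nonpos_of_nonneg_of_nonpos hm30 A1.le
    have c4 : m4 * (pb + δ * R) ≤ 0 :=
      mul_nonpos_of_nonneg_of_nonpos hm40 A3.le
    linarith [c1, c2, c3, c4]
  have A8 : m1 * pa + δ * (a * (a - 1)) * fα ≤ k * (na - 1) * (fα - c) := by
    rcases hcase with haz | ha1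
    · have hm1z : m1 = 0 := by
        rw [haz] at hm1R
        linarith [hm1R]
      rw [haz, hm1z]
      have h := mul_nonneg (mul_nonneg hk0 (by linarith : (0:ℝ) ≤ na - 1)) hfc_pos.le
      linarith [h]
    · have key : a * (a - 1) ≤ k * (na - 1) := by
        have e1 := mul_nonneg (by linarith : (0:ℝ) ≤ k - a) (by linarith : (0:ℝ) ≤ k + a - 1)
        have e2 := mul_nonneg hk0 (by linarith : (0:ℝ) ≤ na - k)
        linarith [e1, e2]
      have e1 : m1 * pa ≤ a * (a - 1) * pa := by
        apply mul_le_mul_of_nonneg_right _ hpa_pos.le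
        linarith [hm1R]
      have e2 : a * (a - 1) * pa + δ * (a * (a - 1)) * fα = a * (a - 1) * (fα - c) := by
        rw [hpa]; ring
      have e3 : a * (a - 1) * (fα - c) ≤ k * (na - 1) * (fα - c) :=
        mul_le_mul_of_nonneg_right key hfc_pos.le
      linarith
  have A7 : δ * ((a + s) - 1) * (a * fα + s * fβ)
      = δ * (a * (a - 1)) * fα + δ * s * (a * fα + (a + s - 1) * fβ) := by ring
  rw [A7]
  linarith [A6, A8]

set_option maxHeartbeats 2000000 in
lemma sum_payoff_le [Fintype I] [DecidableEq I] (A : Finset I) (fα fβ c δ : ℝ)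
    (hA : 1 ≤ A.card) (hB : 1 ≤ Aᶜ.card)
    (hfαβ : fβ < fα) (hfβ : 0 < fβ)
    (hδ0 : 0 < δ) (hδ1 : δ < 1)
    (h1 : (1 - δ) * fα > c)
    (h3 : (1 + δ * ((A.card : ℝ) - 1)) * fα + (1 + δ * ((A.card : ℝ) + (Aᶜ.card : ℝ) - 2)) * fβ < 2 * c)
    (I' : Finset I) (g' : SimpleGraph I)
    (hedges : ∀ i j : I, g'.Adj i j → i ∈ I' ∧ j ∈ I') :
    ∑ i ∈ I', payoff (fTheta A fα fβ) c δ g' i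
      ≤ ((I'.filter (· ∈ A)).card : ℝ) * ((A.card : ℝ) - 1) * (fα - c) := by
  have hfα : 0 < fα := hfβ.trans hfαβ
  set f := fTheta A fα fβ with hfdef
  have hf : ∀ j, 0 < f j := by
    intro j
    simp only [hfdef, fTheta]
    split <;> [exact hfα; exact hfβ]
  have hfA : ∀ j ∈ A, f j = fα := fun j hj => by simp [hfdef, fTheta, hj]
  have hfB : ∀ (j : I), j ∉ A → f j = fβ := fun j hj => by simp [hfdef, fTheta, hj]
  -- the set of non-isolated agents
  set V₁ := univ.filter (fun i : I => ∃ j, g'.Adj i j) with hV₁def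
  have hmemV₁ : ∀ j k : I, g'.Adj j k → j ∈ V₁ := by
    intro j k h
    simp only [hV₁def, mem_filter, mem_univ, true_and]
    exact ⟨k, h⟩
  have hV₁I' : V₁ ⊆ I' := by
    intro i hi
    simp only [hV₁def, mem_filter, mem_univ, true_and] at hi
    obtain ⟨j, hj⟩ := hi
    exact (hedges i j hj).1
  -- restrict the sum to V₁
  have hsum1 : ∑ i ∈ I', payoff f c δ g' i = ∑ i ∈ V₁, payoff f c δ g' i := by
    refine (Finset.sum_subset hV₁I' ?_).symm
    intro i _ hiV
    apply payoff_eq_zero_of_isolated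
    intro j hadj
    exact hiV (hmemV₁ i j hadj)
  -- apply the per-agent bound and sum
  have hT : ∑ i ∈ V₁, payoff f c δ g' i
      ≤ (∑ i ∈ V₁, ∑ j ∈ univ.filter fun j => g'.Adj i j, ((1 - δ) * f j - c))
        + δ * ∑ i ∈ V₁, ∑ j ∈ V₁.erase i, f j := by
    rw [Finset.mul_sum, ← Finset.sum_add_distrib]
    exact Finset.sum_le_sum fun i _ =>
      payoff_le_bound f c δ hf hδ0 hδ1 g' V₁ hmemV₁ i
  -- the indirect-benefit term
  have h2nd : ∑ i ∈ V₁, ∑ j ∈ V₁.erase i, f j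
      = ((V₁.card : ℝ) - 1) * ∑ j ∈ V₁, f j := by
    have hstep : ∀ i ∈ V₁, ∑ j ∈ V₁.erase i, f j = (∑ j ∈ V₁, f j) - f i :=
      fun i hi => Finset.sum_erase_eq_sub hi
    rw [Finset.sum_congr rfl hstep, Finset.sum_sub_distrib, Finset.sum_const, nsmul_eq_mul]
    ring
  -- the direct-link term as a sum over ordered adjacent pairs
  set P := (univ ×ˢ univ).filter (fun p : I × I => g'.Adj p.1 p.2) with hPdef
  have hpair : (∑ i ∈ V₁, ∑ j ∈ univ.filter fun j => g'.Adj i j, ((1 - δ) * f j - c))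
      = ∑ p ∈ P, ((1 - δ) * f p.2 - c) := by
    have e1 : (∑ i ∈ V₁, ∑ j ∈ univ.filter fun j => g'.Adj i j, ((1 - δ) * f j - c))
        = ∑ i : I, ∑ j ∈ univ.filter fun j => g'.Adj i j, ((1 - δ) * f j - c) := by
      apply Finset.sum_subset (Finset.subset_univ V₁)
      intro i _ hiV
      have : (univ.filter fun j => g'.Adj i j) = (∅ : Finset I) := by
        ext j
        simp only [mem_filter, mem_univ, true_and, notMem_empty, iff_false]
        intro hadj
        exact hiV (hmemV₁ i j hadj)
      rw [this, Finset.sum_empty]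
    rw [e1, hPdef, Finset.sum_filter, Finset.sum_product]
    apply Finset.sum_congr rfl
    intro i _
    rw [Finset.sum_filter]
  -- classify ordered adjacent pairs by the types of their endpoints
  set P1 := P.filter (fun p : I × I => p.1 ∈ A ∧ p.2 ∈ A) with hP1
  set P2 := P.filter (fun p : I × I => p.1 ∈ A ∧ p.2 ∉ A) with hP2
  set P3 := P.filter (fun p : I × I => p.1 ∉ A ∧ p.2 ∈ A) with hP3
  set P4 := P.filter (fun p : I × I => p.1 ∉ A ∧ p.2 ∉ A) with hP4
  set pa := (1 - δ) * fα - c with hpa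
  set pb := (1 - δ) * fβ - c with hpb
  -- value of the direct-link term
  have hQa : (P.filter (fun p : I × I => p.2 ∈ A)).card = P1.card + P3.card := by
    have e1 : (P.filter (fun p : I × I => p.2 ∈ A)).filter (fun p => p.1 ∈ A) = P1 := by
      ext p; simp only [hP1, Finset.mem_filter]; tauto
    have e2 : (P.filter (fun p : I × I => p.2 ∈ A)).filter (fun p => ¬ p.1 ∈ A) = P3 := by
      ext p; simp only [hP3, Finset.mem_filter]; tauto
    rw [← e1, ← e2]
    exact (Finset.card_filter_add_card_filter_not _).symm
  have hQb : (P.filter (fun p : I × I => ¬ p.2 ∈ A)).card = P2.card + P4.card := by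
    have e1 : (P.filter (fun p : I × I => ¬ p.2 ∈ A)).filter (fun p => p.1 ∈ A) = P2 := by
      ext p; simp only [hP2, Finset.mem_filter]; tauto
    have e2 : (P.filter (fun p : I × I => ¬ p.2 ∈ A)).filter (fun p => ¬ p.1 ∈ A) = P4 := by
      ext p; simp only [hP4, Finset.mem_filter]; tauto
    rw [← e1, ← e2]
    exact (Finset.card_filter_add_card_filter_not _).symm
  have hval : ∑ p ∈ P, ((1 - δ) * f p.2 - c)
      = ((P1.card : ℝ) + P3.card) * pa + ((P2.card : ℝ) + P4.card) * pb := by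
    rw [← Finset.sum_filter_add_sum_filter_not P (fun p : I × I => p.2 ∈ A)]
    have e1 : ∑ p ∈ P.filter (fun p : I × I => p.2 ∈ A), ((1 - δ) * f p.2 - c)
        = ((P.filter (fun p : I × I => p.2 ∈ A)).card : ℝ) * pa := by
      rw [Finset.sum_congr rfl (fun p hp => ?_), Finset.sum_const, nsmul_eq_mul]
      rw [hfA p.2 (Finset.mem_filter.mp hp).2, hpa]
    have e2 : ∑ p ∈ P.filter (fun p : I × I => ¬ p.2 ∈ A), ((1 - δ) * f p.2 - c)
        = ((P.filter (fun p : I × I => ¬ p.2 ∈ A)).card : ℝ) * pb := by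
      rw [Finset.sum_congr rfl (fun p hp => ?_), Finset.sum_const, nsmul_eq_mul]
      rw [hfB p.2 (Finset.mem_filter.mp hp).2, hpb]
    rw [e1, e2, hQa, hQb]
    push_cast
    ring
  -- symmetry: #(αβ links) = #(βα links)
  have hm23 : P2.card = P3.card := by
    apply Finset.card_bij' (fun (p : I × I) _ => (p.2, p.1)) (fun (p : I × I) _ => (p.2, p.1))
    · intro p hp
      simp only [hP2, hP3, hPdef, Finset.mem_filter, Finset.mem_product, mem_univ,
        true_and] at hp ⊢
      exact ⟨hp.1.symm, hp.2.2, hp.2.1⟩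
    · intro p hp
      simp only [hP2, hP3, hPdef, Finset.mem_filter, Finset.mem_product, mem_univ,
        true_and] at hp ⊢
      exact ⟨hp.1.symm, hp.2.2, hp.2.1⟩
    · intro p _; rfl
    · intro p _; rfl
  set SA := V₁.filter (· ∈ A) with hSA
  set SB := V₁.filter (· ∉ A) with hSB
  -- the αα links live on the non-isolated α agents
  have hm1 : P1.card + SA.card ≤ SA.card * SA.card := by
    have hsub : P1 ⊆ (SA ×ˢ SA).filter (fun p : I × I => ¬ p.1 = p.2) := by
      intro p hp
      simp only [hP1, hPdef, Finset.mem_filter, Finset.mem_product, mem_univ,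
        true_and] at hp
      obtain ⟨hadj, h1A, h2A⟩ := hp
      simp only [Finset.mem_filter, Finset.mem_product, hSA]
      exact ⟨⟨⟨hmemV₁ _ _ hadj, h1A⟩, ⟨hmemV₁ _ _ hadj.symm, h2A⟩⟩, hadj.ne⟩
    have hdiag : ((SA ×ˢ SA).filter (fun p : I × I => p.1 = p.2)).card = SA.card := by
      rw [show (SA ×ˢ SA).filter (fun p : I × I => p.1 = p.2)
          = SA.image (fun a => (a, a)) by
        ext p
        simp only [Finset.mem_filter, Finset.mem_product, Finset.mem_image]
        constructor
        · rintro ⟨⟨h1, _⟩, he⟩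
          exact ⟨p.1, h1, Prod.ext rfl he⟩
        · rintro ⟨a, ha, rfl⟩
          exact ⟨⟨ha, ha⟩, rfl⟩]
      exact Finset.card_image_of_injective _ (fun a b h => (Prod.mk.injEq _ _ _ _).mp h |>.1)
    have htot := Finset.card_filter_add_card_filter_not
      (s := SA ×ˢ SA) (p := fun p : I × I => p.1 = p.2)
    have hcardP : (SA ×ˢ SA).card = SA.card * SA.card := Finset.card_product SA SA
    have hle := Finset.card_le_card hsub
    omega
  -- every non-isolated β agent is the source of a link
  have hm34 : SB.card ≤ P3.card + P4.card := by
    have hsrc : (P.filter (fun p : I × I => ¬ p.1 ∈ A)).card = P3.card + P4.card := by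
      have e1 : (P.filter (fun p : I × I => ¬ p.1 ∈ A)).filter (fun p => p.2 ∈ A) = P3 := by
        ext p; simp only [hP3, Finset.mem_filter]; tauto
      have e2 : (P.filter (fun p : I × I => ¬ p.1 ∈ A)).filter (fun p => ¬ p.2 ∈ A) = P4 := by
        ext p; simp only [hP4, Finset.mem_filter]; tauto
      rw [← e1, ← e2]
      exact (Finset.card_filter_add_card_filter_not _).symm
    rw [← hsrc]
    classical
    apply Finset.card_le_card_of_injOn
      (fun j => (j, if h : ∃ k, g'.Adj j k then h.choose else j))
    · intro j hj
      simp only [Finset.mem_coe, hSB, hV₁def, Finset.mem_filter, mem_univ, true_and] at hj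
      obtain ⟨⟨k, hk⟩, hjA⟩ := hj
      have hex : ∃ k, g'.Adj j k := ⟨k, hk⟩
      simp only [Finset.mem_coe, hPdef, Finset.mem_filter, Finset.mem_product, mem_univ, true_and,
        dif_pos hex]
      exact ⟨hex.choose_spec, hjA⟩
    · intro x _ y _ h
      exact congrArg Prod.fst h
  -- remaining counting facts
  have hM : V₁.card = SA.card + SB.card :=
    (Finset.card_filter_add_card_filter_not (s := V₁) (p := (· ∈ A))).symm
  have hF : ∑ j ∈ V₁, f j = (SA.card : ℝ) * fα + (SB.card : ℝ) * fβ := by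
    rw [← Finset.sum_filter_add_sum_filter_not V₁ (· ∈ A)]
    congr 1
    · rw [Finset.sum_congr rfl (fun j hj => hfA j (Finset.mem_filter.mp hj).2),
        Finset.sum_const, nsmul_eq_mul]
    · rw [Finset.sum_congr rfl (fun j hj => hfB j (Finset.mem_filter.mp hj).2),
        Finset.sum_const, nsmul_eq_mul]
  have haK : SA.card ≤ (I'.filter (· ∈ A)).card := by
    apply Finset.card_le_card
    intro j hj
    simp only [hSA, Finset.mem_filter] at hj ⊢
    exact ⟨hV₁I' hj.1, hj.2⟩
  have hkn : (I'.filter (· ∈ A)).card ≤ A.card := by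
    apply Finset.card_le_card
    intro j hj
    exact (Finset.mem_filter.mp hj).2
  have hsb : SB.card ≤ Aᶜ.card := by
    apply Finset.card_le_card
    intro j hj
    simp only [hSB, Finset.mem_filter] at hj
    simpa using hj.2
  have han : SA.card ≤ A.card := haK.trans hkn
  -- pass to real arithmetic
  have hm1R : (P1.card : ℝ) + SA.card ≤ (SA.card : ℝ) * SA.card := by exact_mod_cast hm1
  have hm23R : (P2.card : ℝ) = P3.card := by exact_mod_cast hm23
  have hm34R : (SB.card : ℝ) ≤ (P3.card : ℝ) + P4.card := by exact_mod_cast hm34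
  have hakR : (SA.card : ℝ) ≤ ((I'.filter (· ∈ A)).card : ℝ) := by exact_mod_cast haK
  have hknR : (((I'.filter (· ∈ A)).card : ℝ)) ≤ (A.card : ℝ) := by exact_mod_cast hkn
  have hsbR : (SB.card : ℝ) ≤ (Aᶜ.card : ℝ) := by exact_mod_cast hsb
  have hna1 : (1:ℝ) ≤ (A.card : ℝ) := by exact_mod_cast hA
  have hnb1 : (1:ℝ) ≤ (Aᶜ.card : ℝ) := by exact_mod_cast hB
  have hcase : (SA.card : ℝ) = 0 ∨ (1:ℝ) ≤ (SA.card : ℝ) := by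
    rcases Nat.eq_zero_or_pos SA.card with hz | hp
    · left; exact_mod_cast hz
    · right; exact_mod_cast hp
  have key := numeric_core fα fβ c δ (SA.card : ℝ) (SB.card : ℝ)
    ((I'.filter (· ∈ A)).card : ℝ) (A.card : ℝ) (Aᶜ.card : ℝ)
    (P1.card : ℝ) (P3.card : ℝ) (P4.card : ℝ)
    hfαβ hfβ hδ0 hδ1 h1 h3
    (Nat.cast_nonneg _) (Nat.cast_nonneg _) (Nat.cast_nonneg _)
    (Nat.cast_nonneg _) (Nat.cast_nonneg _) (Nat.cast_nonneg _)
    hm1R hm34R hakR hknR hsbR hna1 hnb1 hcase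
  have hMR : (V₁.card : ℝ) = (SA.card : ℝ) + SB.card := by
    rw [hM]; push_cast; ring
  calc ∑ i ∈ I', payoff f c δ g' i
      ≤ ((P1.card : ℝ) + P3.card) * pa + ((P2.card : ℝ) + P4.card) * pb
        + δ * (((SA.card : ℝ) + SB.card) - 1) * ((SA.card : ℝ) * fα + (SB.card : ℝ) * fβ) := by
        rw [hsum1]
        refine le_trans hT (le_of_eq ?_)
        rw [hpair, hval, h2nd, hF, hMR]
        ring
    _ ≤ ((I'.filter (· ∈ A)).card : ℝ) * ((A.card : ℝ) - 1) * (fα - c) := by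
        rw [hpa, hpb, hm23R]
        exact key

lemma cliqueOn_walk_mem [DecidableEq I] {A : Finset I} :
    ∀ {i j : I}, (cliqueOn A).Walk i j → i ≠ j → j ∈ A := by
  intro i j w
  induction w with
  | nil => intro h; exact absurd rfl h
  | @cons u v w h p ih =>
      intro _
      by_cases hvw : v = w
      · exact hvw ▸ (h : u ≠ v ∧ u ∈ A ∧ v ∈ A).2.2
      · exact ih hvw

lemma payoff_cliqueOn [Fintype I] [DecidableEq I] {A : Finset I} (fα fβ c δ : ℝ) {i : I}
    (hi : i ∈ A) :
    payoff (fTheta A fα fβ) c δ (cliqueOn A) i = ((A.card : ℝ) - 1) * (fα - c) := by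
  have hA1 : 1 ≤ A.card := card_pos.mpr ⟨i, hi⟩
  have hfil : (univ.filter fun j => j ≠ i ∧ (cliqueOn A).Reachable i j) = A.erase i := by
    ext j
    simp only [mem_filter, mem_univ, true_and, mem_erase]
    constructor
    · rintro ⟨hne, hr⟩
      obtain ⟨w⟩ := hr
      exact ⟨hne, cliqueOn_walk_mem w hne.symm⟩
    · rintro ⟨hne, hj⟩
      exact ⟨hne, SimpleGraph.Adj.reachable (show (cliqueOn A).Adj i j from ⟨hne.symm, hi, hj⟩)⟩
  have hadj : (univ.filter fun j => (cliqueOn A).Adj i j) = A.erase i := by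
    ext j
    simp only [mem_filter, mem_univ, true_and, mem_erase]
    constructor
    · rintro (⟨hne, _, hj⟩ : i ≠ j ∧ i ∈ A ∧ j ∈ A); exact ⟨hne.symm, hj⟩
    · rintro ⟨hne, hj⟩; exact (⟨hne.symm, hi, hj⟩ : i ≠ j ∧ i ∈ A ∧ j ∈ A)
  rw [payoff_eq, hfil, hadj]
  have hterm : ∀ j ∈ A.erase i,
      δ ^ ((cliqueOn A).dist i j - 1) * fTheta A fα fβ j = fα := by
    intro j hj
    have hja : j ∈ A := mem_of_mem_erase hj
    have hne : j ≠ i := ne_of_mem_erase hj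
    have hd : (cliqueOn A).dist i j = 1 :=
      SimpleGraph.dist_eq_one_iff_adj.mpr (show (cliqueOn A).Adj i j from ⟨hne.symm, hi, hja⟩)
    rw [hd]
    simp [fTheta, hja]
  rw [Finset.sum_congr rfl hterm, Finset.sum_const, card_erase_of_mem hi]
  rw [nsmul_eq_mul, Nat.cast_sub hA1]
  push_cast
  ring

/-- Proposition 5(d): under the conditions of Theorem 2(d), the strongly
efficient network (the clique on the type-α agents) is core-stable. -/
theorem prop5d {I : Type*} [Fintype I] [DecidableEq I]
    (A : Finset I) (fα fβ c δ : ℝ)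
    (hA : 1 ≤ A.card) (hB : 1 ≤ Aᶜ.card)
    (hfαβ : fβ < fα) (hfβ : 0 < fβ) (hc : 0 < c)
    (hδ0 : 0 < δ) (hδ1 : δ < 1)
    (h1 : (1 - δ) * fα > c) (h2 : c > (1 - δ) * ((fα + fβ) / 2))
    (h3 : (1 + δ * ((A.card : ℝ) - 1)) * fα + (1 + δ * ((A.card : ℝ) + (Aᶜ.card : ℝ) - 2)) * fβ < 2 * c) :
    CoreStable (fTheta A fα fβ) c δ (cliqueOn A) := by
  rintro ⟨I', g', hedges, hweak, i₀, hi₀, hstrict⟩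
  have hgpay : ∀ i ∈ I', payoff (fTheta A fα fβ) c δ (cliqueOn A) i
      = if i ∈ A then ((A.card : ℝ) - 1) * (fα - c) else 0 := by
    intro i _
    by_cases hiA : i ∈ A
    · rw [if_pos hiA]; exact payoff_cliqueOn fα fβ c δ hiA
    · rw [if_neg hiA]
      apply payoff_eq_zero_of_isolated
      intro j hadj
      exact hiA (hadj : i ≠ j ∧ i ∈ A ∧ j ∈ A).2.1
  have hsumg : ∑ i ∈ I', payoff (fTheta A fα fβ) c δ (cliqueOn A) i
      = ((I'.filter (· ∈ A)).card : ℝ) * ((A.card : ℝ) - 1) * (fα - c) := by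
    rw [Finset.sum_congr rfl hgpay, ← Finset.sum_filter, Finset.sum_const, nsmul_eq_mul]
    ring
  have hlt : ∑ i ∈ I', payoff (fTheta A fα fβ) c δ (cliqueOn A) i
      < ∑ i ∈ I', payoff (fTheta A fα fβ) c δ g' i :=
    Finset.sum_lt_sum hweak ⟨i₀, hi₀, hstrict⟩
  have hle := sum_payoff_le A fα fβ c δ hA hB hfαβ hfβ hδ0 hδ1 h1 h3 I' g' hedges
  rw [hsumg] at hlt
  linarith
end
end

section
/- Proposition 5(e): Suppose (1−δ)·f_α < c, f_α + f_β + δ[(n_β−1)·f_β + (n_α−1)·(f_α+f_β)] > 2c, and 2(n_α−1)·f_α + n_β·(f_α+f_β) + δ[(n_α−1)(n_α−2)·f_α + n_β(n_β−1)·f_β + n_β(n_α−1)·(f_α+f_β)] − 2(n_α+n_β−1)·c > 0, and let g^e be the star on all agents centered at a fixed type-α agent i₀ ∈ A, i.e. with edge set {{i₀, j} : j ∈ I, j ≠ i₀} (the strongly efficient network of Theorem 2(e)). Then g^e is core-stable if and only if u_{i₀}(g^e) ≥ 0. -/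
open Finset

noncomputable section

open scoped Classical

variable {I : Type*}

/-! ### Auxiliary lemmas -/

lemma payoff_isolated [Fintype I] (f : I → ℝ) (c δ : ℝ) (g' : SimpleGraph I) (i : I)
    (h : ∀ b, ¬ g'.Adj i b) : payoff f c δ g' i = 0 := by
  unfold payoff
  have h1 : (univ.filter fun j => j ≠ i ∧ g'.Reachable i j) = ∅ := by
    ext k
    simp only [mem_filter, mem_univ, true_and, notMem_empty, iff_false, not_and]
    rintro hk ⟨w⟩
    cases w with
    | nil => exact hk rfl
    | cons hadj _ => exact h _ hadj
  have h2 : (univ.filter fun j => g'.Adj i j) = ∅ := by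
    ext k; simp [h k]
  rw [h1, h2]
  simp

/-- The key bound: in any network, an agent `j` with a neighbour `a` gets at most
the payoff of a spoke of the full star with an `α`-center, and equality forces
`a` to be the unique neighbour of `j` and every other agent to be adjacent to `a`. -/
lemma payoff_le_spokeBound [Fintype I] (f : I → ℝ) (c δ fα : ℝ)
    (hfpos : ∀ k, 0 < f k) (hfle : ∀ k, f k ≤ fα)
    (hδ0 : 0 < δ) (hδ1 : δ < 1) (hfc : ∀ k, f k - c < δ * f k)
    (g' : SimpleGraph I) (j a : I) (ha : g'.Adj j a) :
    payoff f c δ g' j ≤ (1 - δ) * fα + δ * ((∑ k, f k) - f j) - c ∧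
    (payoff f c δ g' j = (1 - δ) * fα + δ * ((∑ k, f k) - f j) - c →
      (∀ b, g'.Adj j b → b = a) ∧ ∀ k, k ≠ j → k ≠ a → g'.Adj a k) := by
  classical
  have hpay : payoff f c δ g' j =
      (∑ k ∈ univ.filter fun k => k ≠ j ∧ g'.Reachable j k, δ ^ (g'.dist j k - 1) * f k)
        - ((univ.filter fun k => g'.Adj j k).card : ℝ) * c := rfl
  set R : Finset I := univ.filter fun k => k ≠ j ∧ g'.Reachable j k with hRdef
  set N : Finset I := univ.filter fun k => g'.Adj j k with hNdef
  have haN : a ∈ N := by simp [hNdef, ha]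
  have hNmem : ∀ {k}, k ∈ N → g'.Adj j k := by
    intro k hk; simpa [hNdef] using hk
  have hRmem : ∀ {k}, k ∈ R → k ≠ j ∧ g'.Reachable j k := by
    intro k hk; simpa [hRdef] using hk
  have hNR : N ⊆ R := by
    intro k hk
    have hadj := hNmem hk
    simp only [hRdef, mem_filter, mem_univ, true_and]
    exact ⟨(g'.ne_of_adj hadj).symm, hadj.reachable⟩
  -- distance facts
  have hdistN : ∀ {k}, k ∈ N → g'.dist j k = 1 := by
    intro k hk; exact SimpleGraph.dist_eq_one_iff_adj.mpr (hNmem hk)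
  have hdist2 : ∀ {k}, k ∈ R \ N → 2 ≤ g'.dist j k := by
    intro k hk
    obtain ⟨hkR, hkN⟩ := Finset.mem_sdiff.mp hk
    obtain ⟨hkj, hreach⟩ := hRmem hkR
    have h0 : 0 < g'.dist j k := hreach.pos_dist_of_ne (Ne.symm hkj)
    have h1 : g'.dist j k ≠ 1 := by
      intro hh
      exact hkN (by simp [hNdef, SimpleGraph.dist_eq_one_iff_adj.mp hh])
    omega
  -- split the sum
  have hsplit : ∑ k ∈ R, δ ^ (g'.dist j k - 1) * f k
      = (∑ k ∈ R \ N, δ ^ (g'.dist j k - 1) * f k) + ∑ k ∈ N, f k := by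
    rw [← Finset.sum_sdiff hNR]
    congr 1
    refine Finset.sum_congr rfl fun k hk => ?_
    rw [hdistN hk]; simp
  have hsplitN : ∑ k ∈ N, f k = f a + ∑ k ∈ N.erase a, f k :=
    (Finset.add_sum_erase N f haN).symm
  have hcardN : (N.card : ℝ) = ((N.erase a).card : ℝ) + 1 := by
    rw [← Finset.card_erase_add_one haN]; push_cast; ring
  -- step 2 : distance-two discounting
  have hS2 : (∑ k ∈ R \ N, δ ^ (g'.dist j k - 1) * f k) ≤ ∑ k ∈ R \ N, δ * f k := by
    refine Finset.sum_le_sum fun k hk => ?_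
    have hd := hdist2 hk
    have hpow : δ ^ (g'.dist j k - 1) ≤ δ ^ 1 :=
      pow_le_pow_of_le_one hδ0.le hδ1.le (by omega)
    have := mul_le_mul_of_nonneg_right hpow (hfpos k).le
    simpa using this
  -- step 3 : extra links are unprofitable
  have hYsub : ∑ k ∈ N.erase a, (f k - c)
      = (∑ k ∈ N.erase a, f k) - ((N.erase a).card : ℝ) * c := by
    rw [Finset.sum_sub_distrib, Finset.sum_const, nsmul_eq_mul]
  have hS3 : (∑ k ∈ N.erase a, f k) - ((N.erase a).card : ℝ) * c
      ≤ ∑ k ∈ N.erase a, δ * f k := by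
    rw [← hYsub]
    exact Finset.sum_le_sum fun k _ => (hfc k).le
  -- step 4 : all other agents at distance two
  have hdisj : Disjoint (N.erase a) (R \ N) := by
    rw [Finset.disjoint_left]
    intro x hx hx'
    exact (Finset.mem_sdiff.mp hx').2 (Finset.mem_of_mem_erase hx)
  have hunion_sub : (N.erase a) ∪ (R \ N) ⊆ (univ.erase j).erase a := by
    intro x hx
    rcases Finset.mem_union.mp hx with hx | hx
    · have hxa := Finset.ne_of_mem_erase hx
      have hxN := Finset.mem_of_mem_erase hx
      exact Finset.mem_erase.mpr ⟨hxa,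
        Finset.mem_erase.mpr ⟨(g'.ne_of_adj (hNmem hxN)).symm, mem_univ x⟩⟩
    · obtain ⟨hxR, hxN⟩ := Finset.mem_sdiff.mp hx
      refine Finset.mem_erase.mpr ⟨fun hxa => hxN (hxa ▸ haN),
        Finset.mem_erase.mpr ⟨(hRmem hxR).1, mem_univ x⟩⟩
  have hsum_union : (∑ k ∈ N.erase a, f k) + ∑ k ∈ R \ N, f k
      = ∑ k ∈ (N.erase a) ∪ (R \ N), f k := (Finset.sum_union hdisj).symm
  have hS4 : ∑ k ∈ (N.erase a) ∪ (R \ N), f k ≤ ∑ k ∈ (univ.erase j).erase a, f k :=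
    Finset.sum_le_sum_of_subset_of_nonneg hunion_sub fun k _ _ => (hfpos k).le
  have haj : a ≠ j := (g'.ne_of_adj ha).symm
  have hTsum : ∑ k ∈ (univ.erase j).erase a, f k = (∑ k, f k) - f j - f a := by
    have e1 : f j + ∑ k ∈ univ.erase j, f k = ∑ k, f k :=
      Finset.add_sum_erase _ f (mem_univ j)
    have e2 : f a + ∑ k ∈ (univ.erase j).erase a, f k = ∑ k ∈ univ.erase j, f k :=
      Finset.add_sum_erase _ f (Finset.mem_erase.mpr ⟨haj, mem_univ a⟩)
    linarith
  have hdsum : ∀ (s : Finset I), ∑ k ∈ s, δ * f k = δ * ∑ k ∈ s, f k := by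
    intro s; rw [Finset.mul_sum]
  have hfin : (1 - δ) * f a ≤ (1 - δ) * fα :=
    mul_le_mul_of_nonneg_left (hfle a) (by linarith)
  have hδmono : δ * (∑ k ∈ (N.erase a) ∪ (R \ N), f k)
      ≤ δ * ∑ k ∈ (univ.erase j).erase a, f k :=
    mul_le_mul_of_nonneg_left hS4 hδ0.le
  constructor
  · rw [hpay, hsplit, hsplitN, hcardN]
    rw [hdsum] at hS2 hS3
    rw [← hsum_union] at hδmono
    nlinarith [hS2, hS3, hδmono, hfin, hTsum]
  · intro heq
    rw [hpay, hsplit, hsplitN, hcardN] at heq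
    have huniq : ∀ b, g'.Adj j b → b = a := by
      intro b hb
      by_contra hba
      have hbmem : b ∈ N.erase a :=
        Finset.mem_erase.mpr ⟨hba, by simp [hNdef, hb]⟩
      have hstrict : ∑ k ∈ N.erase a, (f k - c) < ∑ k ∈ N.erase a, δ * f k :=
        Finset.sum_lt_sum (fun k _ => (hfc k).le) ⟨b, hbmem, hfc b⟩
      rw [hYsub] at hstrict
      rw [hdsum] at hS2 hstrict
      rw [← hsum_union] at hδmono
      nlinarith [hS2, hstrict, hδmono, hfin, hTsum]
    refine ⟨huniq, ?_⟩
    have hErase : N.erase a = ∅ := by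
      rw [Finset.eq_empty_iff_forall_notMem]
      intro b hb
      exact (Finset.ne_of_mem_erase hb) (huniq b (hNmem (Finset.mem_of_mem_erase hb)))
    intro k hkj hka
    have hkmem : k ∈ (N.erase a) ∪ (R \ N) := by
      by_contra hk
      have hkbig : k ∈ (univ.erase j).erase a :=
        Finset.mem_erase.mpr ⟨hka, Finset.mem_erase.mpr ⟨hkj, mem_univ k⟩⟩
      have hstrict : ∑ x ∈ (N.erase a) ∪ (R \ N), f x
          < ∑ x ∈ (univ.erase j).erase a, f x :=
        Finset.sum_lt_sum_of_subset hunion_sub hkbig hk (hfpos k)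
          fun m _ _ => (hfpos m).le
      have hδstrict : δ * (∑ x ∈ (N.erase a) ∪ (R \ N), f x)
          < δ * ∑ x ∈ (univ.erase j).erase a, f x :=
        mul_lt_mul_of_pos_left hstrict hδ0
      rw [hdsum] at hS2 hS3
      rw [← hsum_union] at hδstrict
      nlinarith [hS2, hS3, hδstrict, hfin, hTsum]
    have hkRN : k ∈ R \ N := by
      rcases Finset.mem_union.mp hkmem with hk | hk
      · exact absurd hk (by rw [hErase]; exact Finset.notMem_empty k)
      · exact hk
    have hdistk : g'.dist j k = 2 := by
      by_contra hdk
      have hd3 : 3 ≤ g'.dist j k := by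
        have := hdist2 hkRN; omega
      have htermlt : δ ^ (g'.dist j k - 1) * f k < δ * f k := by
        have hpow : δ ^ (g'.dist j k - 1) < δ ^ 1 :=
          pow_lt_pow_right_of_lt_one₀ hδ0 hδ1 (by omega)
        have := mul_lt_mul_of_pos_right hpow (hfpos k)
        simpa using this
      have hstrict : (∑ x ∈ R \ N, δ ^ (g'.dist j x - 1) * f x) < ∑ x ∈ R \ N, δ * f x := by
        refine Finset.sum_lt_sum (fun x hx => ?_) ⟨k, hkRN, htermlt⟩
        have hd := hdist2 hx
        have hpow : δ ^ (g'.dist j x - 1) ≤ δ ^ 1 :=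
          pow_le_pow_of_le_one hδ0.le hδ1.le (by omega)
        have := mul_le_mul_of_nonneg_right hpow (hfpos x).le
        simpa using this
      rw [hdsum] at hstrict hS3
      rw [← hsum_union] at hδmono
      nlinarith [hstrict, hS3, hδmono, hfin, hTsum]
    obtain ⟨hkR, hkN⟩ := Finset.mem_sdiff.mp hkRN
    obtain ⟨p, hp⟩ := (hRmem hkR).2.exists_walk_length_eq_dist
    rw [hdistk] at hp
    cases p with
    | nil => simp at hp
    | cons hadj q =>
      cases q with
      | nil => simp at hp
      | cons hadj' q' =>
        simp only [SimpleGraph.Walk.length_cons, Nat.add_eq, Nat.add_left_cancel_iff] at hp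
        have hq0 : q'.length = 0 := by omega
        have hmk := SimpleGraph.Walk.eq_of_length_eq_zero hq0
        have hma := huniq _ hadj
        subst hma
        rw [← hmk]
        exact hadj'

lemma starAll_adj_center [Fintype I] (i₀ k : I) (hk : k ≠ i₀) : (starAll i₀).Adj i₀ k :=
  ⟨Ne.symm hk, Or.inl rfl⟩

lemma starAll_reachable [Fintype I] (i₀ j k : I) (hj : j ≠ i₀) (hk : k ≠ j) :
    (starAll i₀).Reachable j k := by
  have hji : (starAll i₀).Adj j i₀ := ⟨hj, Or.inr rfl⟩
  by_cases hki : k = i₀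
  · subst hki; exact hji.reachable
  · exact hji.reachable.trans ((starAll_adj_center i₀ k hki)).reachable

/-- Payoff of a spoke of the full star. -/
lemma payoff_starAll_spoke [Fintype I] (f : I → ℝ) (c δ : ℝ) (i₀ j : I) (hj : j ≠ i₀) :
    payoff f c δ (starAll i₀) j = f i₀ + δ * ((∑ k, f k) - f j - f i₀) - c := by
  classical
  have hpay : payoff f c δ (starAll i₀) j =
      (∑ k ∈ univ.filter fun k => k ≠ j ∧ (starAll i₀).Reachable j k,
          δ ^ ((starAll i₀).dist j k - 1) * f k)
        - ((univ.filter fun k => (starAll i₀).Adj j k).card : ℝ) * c := rfl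
  have hadji : (starAll i₀).Adj j i₀ := ⟨hj, Or.inr rfl⟩
  have hfilR : (univ.filter fun k => k ≠ j ∧ (starAll i₀).Reachable j k) = univ.erase j := by
    ext k
    simp only [mem_filter, mem_univ, true_and, Finset.mem_erase, and_true]
    exact ⟨fun h => h.1, fun h => ⟨h, starAll_reachable i₀ j k hj h⟩⟩
  have hfilN : (univ.filter fun k => (starAll i₀).Adj j k) = {i₀} := by
    ext k
    simp only [mem_filter, mem_univ, true_and, Finset.mem_singleton]
    constructor
    · rintro ⟨hne, h | h⟩
      · exact absurd h hj
      · exact h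
    · rintro rfl; exact hadji
  have hdist1 : (starAll i₀).dist j i₀ = 1 := SimpleGraph.dist_eq_one_iff_adj.mpr hadji
  have hdist2 : ∀ k, k ≠ j → k ≠ i₀ → (starAll i₀).dist j k = 2 := by
    intro k hk hki
    have hw : ((starAll i₀).dist j k) ≤ 2 := by
      have := SimpleGraph.dist_le (SimpleGraph.Walk.cons hadji
        (SimpleGraph.Walk.cons (starAll_adj_center i₀ k hki) SimpleGraph.Walk.nil))
      simpa using this
    have h0 : 0 < (starAll i₀).dist j k :=
      (starAll_reachable i₀ j k hj hk).pos_dist_of_ne (Ne.symm hk)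
    have h1 : (starAll i₀).dist j k ≠ 1 := by
      intro hh
      rcases (SimpleGraph.dist_eq_one_iff_adj.mp hh).2 with h | h
      · exact hj h
      · exact hki h
    omega
  have hi₀mem : i₀ ∈ univ.erase j := Finset.mem_erase.mpr ⟨Ne.symm hj, mem_univ i₀⟩
  have hsum : ∑ k ∈ univ.erase j, δ ^ ((starAll i₀).dist j k - 1) * f k
      = f i₀ + δ * ∑ k ∈ (univ.erase j).erase i₀, f k := by
    rw [← Finset.add_sum_erase _ _ hi₀mem, hdist1]
    congr 1
    · simp
    · rw [Finset.mul_sum]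
      refine Finset.sum_congr rfl fun k hk => ?_
      have hki := Finset.ne_of_mem_erase hk
      have hkj := Finset.ne_of_mem_erase (Finset.mem_of_mem_erase hk)
      rw [hdist2 k hkj hki]
      norm_num
  have hTsum : ∑ k ∈ (univ.erase j).erase i₀, f k = (∑ k, f k) - f j - f i₀ := by
    have e1 : f j + ∑ k ∈ univ.erase j, f k = ∑ k, f k :=
      Finset.add_sum_erase _ f (mem_univ j)
    have e2 : f i₀ + ∑ k ∈ (univ.erase j).erase i₀, f k = ∑ k ∈ univ.erase j, f k :=
      Finset.add_sum_erase _ f hi₀mem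
    linarith
  rw [hpay, hfilR, hfilN, hsum, hTsum]
  simp


lemma fTheta_sum [Fintype I] [DecidableEq I] (A : Finset I) (fα fβ : ℝ) :
    ∑ k, fTheta A fα fβ k = (A.card : ℝ) * fα + (Aᶜ.card : ℝ) * fβ := by
  have h1 : ∑ k ∈ A, fTheta A fα fβ k = (A.card : ℝ) * fα := by
    rw [Finset.sum_congr rfl fun k hk => show fTheta A fα fβ k = fα from if_pos hk]
    rw [Finset.sum_const, nsmul_eq_mul]
  have h2 : ∑ k ∈ Aᶜ, fTheta A fα fβ k = (Aᶜ.card : ℝ) * fβ := by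
    rw [Finset.sum_congr rfl fun k hk =>
      show fTheta A fα fβ k = fβ from if_neg (Finset.mem_compl.mp hk)]
    rw [Finset.sum_const, nsmul_eq_mul]
  rw [← Finset.sum_add_sum_compl A, h1, h2]

lemma spoke_pos [Fintype I] [DecidableEq I] (A : Finset I) (fα fβ c δ : ℝ)
    (hA : 1 ≤ A.card) (hB : 1 ≤ Aᶜ.card) (hfαβ : fβ < fα) (hfβ : 0 < fβ)
    (hδ0 : 0 < δ) (hδ1 : δ < 1)
    (h2 : fα + fβ + δ * (((Aᶜ.card : ℝ) - 1) * fβ + ((A.card : ℝ) - 1) * (fα + fβ)) > 2 * c)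
    (i₀ : I) (hi₀ : i₀ ∈ A) (j : I) (hj : j ≠ i₀) :
    0 < (1 - δ) * fα + δ * ((∑ k, fTheta A fα fβ k) - fTheta A fα fβ j) - c := by
  rw [fTheta_sum]
  have ha1 : (1:ℝ) ≤ (A.card : ℝ) := by exact_mod_cast hA
  have hb1 : (1:ℝ) ≤ (Aᶜ.card : ℝ) := by exact_mod_cast hB
  by_cases hjA : j ∈ A
  · have ha2 : (2:ℝ) ≤ (A.card : ℝ) := by
      have : 1 < A.card := Finset.one_lt_card.mpr ⟨i₀, hi₀, j, hjA, Ne.symm hj⟩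
      exact_mod_cast this
    rw [show fTheta A fα fβ j = fα from if_pos hjA]
    nlinarith [mul_nonneg (mul_nonneg hδ0.le (by linarith : (0:ℝ) ≤ (A.card : ℝ) - 2))
        (by linarith : (0:ℝ) ≤ fα - fβ),
      mul_nonneg (mul_nonneg hδ0.le (by linarith : (0:ℝ) ≤ (Aᶜ.card : ℝ) - 1)) hfβ.le,
      mul_pos (by linarith : (0:ℝ) < 1 - δ) (by linarith : (0:ℝ) < fα - fβ)]
  · rw [show fTheta A fα fβ j = fβ from if_neg hjA]
    nlinarith [mul_nonneg (mul_nonneg hδ0.le (by linarith : (0:ℝ) ≤ (A.card : ℝ) - 1))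
        (by linarith : (0:ℝ) ≤ fα - fβ),
      mul_nonneg (mul_nonneg hδ0.le (by linarith : (0:ℝ) ≤ (Aᶜ.card : ℝ) - 1)) hfβ.le]

/-- Proposition 5(e): under the conditions of Theorem 2(e), the star on all
agents with type-α center `i₀` is core-stable iff `i₀` gets a non-negative payoff. -/
theorem prop5e {I : Type*} [Fintype I] [DecidableEq I]
    (A : Finset I) (fα fβ c δ : ℝ)
    (hA : 1 ≤ A.card) (hB : 1 ≤ Aᶜ.card)
    (hfαβ : fβ < fα) (hfβ : 0 < fβ) (hc : 0 < c)
    (hδ0 : 0 < δ) (hδ1 : δ < 1)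
    (h1 : (1 - δ) * fα < c)
    (h2 : fα + fβ + δ * (((Aᶜ.card : ℝ) - 1) * fβ + ((A.card : ℝ) - 1) * (fα + fβ)) > 2 * c)
    (h3 : 2 * ((A.card : ℝ) - 1) * fα + (Aᶜ.card : ℝ) * (fα + fβ) + δ * (((A.card : ℝ) - 1) * ((A.card : ℝ) - 2) * fα + (Aᶜ.card : ℝ) * ((Aᶜ.card : ℝ) - 1) * fβ + (Aᶜ.card : ℝ) * ((A.card : ℝ) - 1) * (fα + fβ)) - 2 * ((A.card : ℝ) + (Aᶜ.card : ℝ) - 1) * c > 0)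
    (i₀ : I) (hi₀ : i₀ ∈ A) :
    CoreStable (fTheta A fα fβ) c δ (starAll i₀) ↔
      payoff (fTheta A fα fβ) c δ (starAll i₀) i₀ ≥ 0 := by
  have hfα : 0 < fα := lt_trans hfβ hfαβ
  set f := fTheta A fα fβ with hfdef
  have hfpos : ∀ k, 0 < f k := by
    intro k; rw [hfdef]; unfold fTheta; split
    · exact hfα
    · exact hfβ
  have hfle : ∀ k, f k ≤ fα := by
    intro k; rw [hfdef]; unfold fTheta; split
    · exact le_refl fα
    · exact hfαβ.le
  have hfi₀ : f i₀ = fα := if_pos hi₀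
  have hfc : ∀ k, f k - c < δ * f k := by
    intro k
    have h' : (1 - δ) * f k ≤ (1 - δ) * fα :=
      mul_le_mul_of_nonneg_left (hfle k) (by linarith)
    nlinarith
  have hMpos : ∀ j, j ≠ i₀ → 0 < (1 - δ) * fα + δ * ((∑ k, f k) - f j) - c := by
    intro j hj
    exact spoke_pos A fα fβ c δ hA hB hfαβ hfβ hδ0 hδ1 h2 i₀ hi₀ j hj
  have hspoke : ∀ j, j ≠ i₀ →
      payoff f c δ (starAll i₀) j = (1 - δ) * fα + δ * ((∑ k, f k) - f j) - c := by
    intro j hj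
    rw [payoff_starAll_spoke f c δ i₀ j hj, hfi₀]; ring
  constructor
  · intro hcs
    by_contra hneg
    rw [ge_iff_le, not_le] at hneg
    refine hcs ⟨{i₀}, ⊥, ?_, ?_, ⟨i₀, Finset.mem_singleton_self i₀, ?_⟩⟩
    · intro i j hij; simp at hij
    · intro i hi
      rw [Finset.mem_singleton] at hi; rw [hi]
      rw [payoff_isolated f c δ ⊥ i₀ (fun b => by simp)]
      linarith
    · rw [payoff_isolated f c δ ⊥ i₀ (fun b => by simp)]
      linarith
  · intro h0 hex
    obtain ⟨I', g', hE, hW, i', hi'I, hstr⟩ := hex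
    have hno_spoke : ∀ jj, jj ≠ i₀ →
        ¬ (payoff f c δ (starAll i₀) jj < payoff f c δ g' jj) := by
      intro jj hjj hlt
      rw [hspoke jj hjj] at hlt
      by_cases hiso : ∃ b, g'.Adj jj b
      · obtain ⟨b, hb⟩ := hiso
        have hbd := (payoff_le_spokeBound f c δ fα hfpos hfle hδ0 hδ1 hfc g' jj b hb).1
        linarith
      · push_neg at hiso
        rw [payoff_isolated f c δ g' jj hiso] at hlt
        linarith [hMpos jj hjj]
    have hi'eq : i' = i₀ := by
      by_contra hne
      exact hno_spoke i' hne hstr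
    rw [hi'eq] at hstr
    have hpos' : 0 < payoff f c δ g' i₀ := lt_of_le_of_lt h0 hstr
    have hex' : ∃ b, g'.Adj i₀ b := by
      by_contra hiso; push_neg at hiso
      rw [payoff_isolated f c δ g' i₀ hiso] at hpos'
      exact lt_irrefl 0 hpos'
    obtain ⟨aa, haa⟩ := hex'
    have haai : aa ≠ i₀ := (g'.ne_of_adj haa).symm
    have haaI : aa ∈ I' := (hE i₀ aa haa).2
    have hwa := hW aa haaI
    rw [hspoke aa haai] at hwa
    have hbd := payoff_le_spokeBound f c δ fα hfpos hfle hδ0 hδ1 hfc g' aa i₀ haa.symm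
    obtain ⟨huniq_a, hadj_all⟩ := hbd.2 (le_antisymm hbd.1 hwa)
    have hstar_adj : ∀ k, k ≠ i₀ → g'.Adj i₀ k := by
      intro k hk
      by_cases hka : k = aa
      · subst hka; exact haa
      · exact hadj_all k hka hk
    have huniq_spoke : ∀ k, k ≠ i₀ → ∀ b, g'.Adj k b → b = i₀ := by
      intro k hk
      have hkI : k ∈ I' := (hE i₀ k (hstar_adj k hk)).2
      have hwk := hW k hkI
      rw [hspoke k hk] at hwk
      have hbdk := payoff_le_spokeBound f c δ fα hfpos hfle hδ0 hδ1 hfc g' k i₀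
        (hstar_adj k hk).symm
      exact (hbdk.2 (le_antisymm hbdk.1 hwk)).1
    have hgg : g' = starAll i₀ := by
      ext x y
      constructor
      · intro hxy
        refine ⟨g'.ne_of_adj hxy, ?_⟩
        by_cases hx : x = i₀
        · exact Or.inl hx
        · exact Or.inr (huniq_spoke x hx y hxy)
      · rintro ⟨hne, h | h⟩
        · subst h; exact hstar_adj y (Ne.symm hne)
        · subst h; exact (hstar_adj x hne).symm
    rw [hgg] at hstr
    exact lt_irrefl _ hstr
end
end
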